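/- arXiv:2011.10978 — 11 statements merged into one kernel-verified Lean document; each statement's English description precedes it below -/
import Mathlib

section
/- Let β₁ + p^{k₁}∗ and β₂ + p^{k₂}∗ be two distinct, non-nested representative roots in ℤ_{p^k} with k₁ ≤ k₂. Then for any a₁ ∈ β₁ + p^{k₁}∗ and a₂ ∈ β₂ + p^{k₂}∗, the p-adic valuation v_p(a₁ - a₂) equals v_p(β₁ - β₂). -/
theorem valuation_of_difference_of_elements_of_rep_roots
    (p : ℕ) (hp : p.Prime) (k k₁ k₂ : ℕ) (hk₁ : k₁ ≤ k) (hk₂ : k₂ ≤ k)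
    (hkk : k₁ ≤ k₂) (β₁ β₂ : ℤ)
    (hnonnested : ¬ ((p : ℤ) ^ k₁ ∣ β₁ - β₂))
    (y₁ y₂ : ℤ) :
    padicValInt p ((β₁ + (p : ℤ) ^ k₁ * y₁) - (β₂ + (p : ℤ) ^ k₂ * y₂)) =
      padicValInt p (β₁ - β₂) := by
  haveI : Fact p.Prime := ⟨hp⟩
  set d : ℤ := β₁ - β₂ with hd
  have hd0 : d ≠ 0 := by
    intro h; exact hnonnested (h ▸ dvd_zero _)
  set v := padicValInt p d with hv
  set c : ℤ := y₁ - (p : ℤ) ^ (k₂ - k₁) * y₂ with hc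
  have hs : (β₁ + (p : ℤ) ^ k₁ * y₁) - (β₂ + (p : ℤ) ^ k₂ * y₂)
      = d + (p : ℤ) ^ k₁ * c := by
    have : (p : ℤ) ^ k₂ = (p : ℤ) ^ k₁ * (p : ℤ) ^ (k₂ - k₁) := by
      rw [← pow_add, Nat.add_sub_cancel' hkk]
    rw [hd, hc, this]; ring
  have hvk : v < k₁ := by
    by_contra h
    push_neg at h
    exact hnonnested (dvd_trans (pow_dvd_pow _ h) (padicValInt_dvd (p := p) d))
  have hdvd : (p : ℤ) ^ v ∣ d + (p : ℤ) ^ k₁ * c :=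
    dvd_add (padicValInt_dvd (p := p) d)
      (dvd_mul_of_dvd_left (pow_dvd_pow _ hvk.le) _)
  have hndvd : ¬ (p : ℤ) ^ (v + 1) ∣ d + (p : ℤ) ^ k₁ * c := by
    intro h
    have h2 : (p : ℤ) ^ (v + 1) ∣ d := by
      have : (p : ℤ) ^ (v + 1) ∣ (p : ℤ) ^ k₁ * c :=
        dvd_mul_of_dvd_left (pow_dvd_pow _ hvk) _
      have := dvd_sub h this
      simpa using this
    rcases (padicValInt_dvd_iff (v + 1) d).mp h2 with h | h
    · exact hd0 h
    · omega
  have hs0 : d + (p : ℤ) ^ k₁ * c ≠ 0 := by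
    intro h; exact hndvd (h ▸ dvd_zero _)
  rw [hs]
  have h1 : v ≤ padicValInt p (d + (p : ℤ) ^ k₁ * c) := by
    rcases (padicValInt_dvd_iff v _).mp hdvd with h | h
    · exact absurd h hs0
    · exact h
  have h2 : padicValInt p (d + (p : ℤ) ^ k₁ * c) ≤ v := by
    by_contra h
    push_neg at h
    exact hndvd ((padicValInt_dvd_iff (v + 1) _).mpr (Or.inr h))
  omega
end

section
/- Any subset S ⊆ ℤ_{p^k} has a unique minimal representative-root representation: there is exactly one collection {β_i + p^{k_i}∗}_{i=1}^l of representative roots whose union is S, such that no representative root in the collection is contained in another, and for each i, the union over b ∈ {0,...,p-1} of (β_i + p^{k_i}∗) + b·p^{k_i - 1} is not contained in S. -/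
/-- The representative root `β + p^j∗` as a subset of `ZMod (p^k)`. -/
def repRoot (p k : ℕ) (β : ZMod (p ^ k)) (j : ℕ) : Set (ZMod (p ^ k)) :=
  {x | ∃ y : ZMod (p ^ k), x = β + (p : ZMod (p ^ k)) ^ j * y}

/-- A set is a representative root if it is of the form `β + p^j∗` for some `β` and `j ≤ k`. -/
def IsRepRoot (p k : ℕ) (r : Set (ZMod (p ^ k))) : Prop :=
  ∃ (β : ZMod (p ^ k)) (j : ℕ), j ≤ k ∧ r = repRoot p k β j

/-- `L` is a minimal representative-root representation of `S`:
(1) the members of `L` are representative roots whose union is `S`,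
(2) no member is contained in another member,
(3) for each member `β + p^j∗` with `j ≥ 1`, the union over `b ∈ [p]` of the
    translates `(β + p^j∗) + b·p^(j-1)` is not contained in `S`. -/
def IsMinimalRep (p k : ℕ) (S : Set (ZMod (p ^ k))) (L : Set (Set (ZMod (p ^ k)))) : Prop :=
  (∀ r ∈ L, IsRepRoot p k r) ∧
  (⋃₀ L = S) ∧
  (∀ r ∈ L, ∀ r' ∈ L, r ⊆ r' → r = r') ∧
  (∀ r ∈ L, ∀ (β : ZMod (p ^ k)) (j : ℕ), j ≤ k → r = repRoot p k β j → 1 ≤ j →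
    ¬ (⋃ b ∈ Finset.range p, (fun x => x + (p : ZMod (p ^ k)) ^ (j - 1) * (b : ZMod (p ^ k))) '' r)
        ⊆ S)

section Aux

variable {p k : ℕ}

lemma mem_repRoot_self (β : ZMod (p ^ k)) (j : ℕ) : β ∈ repRoot p k β j :=
  ⟨0, by ring⟩

lemma repRoot_subset_of_le {β β' : ZMod (p ^ k)} {j j' : ℕ} (h : j ≤ j')
    {x : ZMod (p ^ k)} (hx : x ∈ repRoot p k β j) (hx' : x ∈ repRoot p k β' j') :
    repRoot p k β' j' ⊆ repRoot p k β j := by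
  obtain ⟨y, rfl⟩ := hx
  obtain ⟨y', hy'⟩ := hx'
  rintro z ⟨w, rfl⟩
  refine ⟨y + p ^ (j' - j) * (w - y'), ?_⟩
  have hpow : (p : ZMod (p ^ k)) ^ j' = p ^ j * p ^ (j' - j) := by
    rw [← pow_add]; congr 1; omega
  have hb : β' = β + p ^ j * y - (p : ZMod (p ^ k)) ^ j' * y' := by linear_combination -hy'
  rw [hb, hpow]; ring

lemma pPow_k_eq_zero (p k : ℕ) : (p : ZMod (p ^ k)) ^ k = 0 := by
  have : ((p ^ k : ℕ) : ZMod (p ^ k)) = 0 := ZMod.natCast_self _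
  push_cast at this
  exact this

/-- The union of the `p` translates of `β + p^j∗` by multiples of `p^(j-1)` is
`β + p^(j-1)∗`. -/
lemma parent_union (hp : 0 < p) [NeZero (p ^ k)] (β : ZMod (p ^ k)) {j : ℕ} (hj : 1 ≤ j) :
    (⋃ b ∈ Finset.range p,
        (fun x => x + (p : ZMod (p ^ k)) ^ (j - 1) * (b : ZMod (p ^ k))) '' repRoot p k β j)
      = repRoot p k β (j - 1) := by
  have hpj : (p : ZMod (p ^ k)) ^ j = p ^ (j - 1) * p := by
    rw [← pow_succ]; congr 1; omega
  ext z
  simp only [Set.mem_iUnion, Set.mem_image, Finset.mem_range]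
  constructor
  · rintro ⟨b, hb, x, ⟨y, rfl⟩, rfl⟩
    refine ⟨p * y + b, ?_⟩
    rw [hpj]; ring
  · rintro ⟨y, rfl⟩
    refine ⟨y.val % p, Nat.mod_lt _ hp, β + (p : ZMod (p ^ k)) ^ j * (y.val / p : ℕ),
      ⟨(y.val / p : ℕ), rfl⟩, ?_⟩
    have hy : ((y.val % p + p * (y.val / p) : ℕ) : ZMod (p ^ k)) = y := by
      rw [Nat.mod_add_div]
      exact ZMod.natCast_rightInverse y
    push_cast at hy
    rw [hpj]
    linear_combination ((p : ZMod (p ^ k)) ^ (j - 1)) * hy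

/-- `β + p^(j-1)` lies outside `β + p^j∗` when `1 ≤ j ≤ k`. -/
lemma notMem_strict (hp : p.Prime) {j : ℕ} (hj1 : 1 ≤ j) (hjk : j ≤ k) (β : ZMod (p ^ k)) :
    β + (p : ZMod (p ^ k)) ^ (j - 1) ∉ repRoot p k β j := by
  haveI : NeZero (p ^ k) := ⟨pow_ne_zero k hp.pos.ne'⟩
  rintro ⟨y, hy⟩
  have hpj : (p : ZMod (p ^ k)) ^ j = p ^ (j - 1) * p := by
    rw [← pow_succ]; congr 1; omega
  have h1 : (p : ZMod (p ^ k)) ^ (j - 1) * (1 - p * y) = 0 := by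
    rw [hpj] at hy; linear_combination hy
  have hnil : IsNilpotent ((p : ZMod (p ^ k)) * y) :=
    ⟨k, by rw [mul_pow, pPow_k_eq_zero, zero_mul]⟩
  obtain ⟨u, hu⟩ := hnil.isUnit_one_sub
  have h2 : (p : ZMod (p ^ k)) ^ (j - 1) = 0 := by
    calc (p : ZMod (p ^ k)) ^ (j - 1)
        = (p : ZMod (p ^ k)) ^ (j - 1) * (↑u * ↑u⁻¹) := by rw [Units.mul_inv, mul_one]
      _ = ((p : ZMod (p ^ k)) ^ (j - 1) * (1 - p * y)) * ↑u⁻¹ := by rw [hu]; ring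
      _ = 0 := by rw [h1, zero_mul]
  have h3 : ((p ^ (j - 1) : ℕ) : ZMod (p ^ k)) = 0 := by push_cast; exact h2
  rw [ZMod.natCast_eq_zero_iff] at h3
  have h4 := Nat.le_of_dvd (pow_pos hp.pos _) h3
  have h5 : p ^ (j - 1) < p ^ k := Nat.pow_lt_pow_right hp.one_lt (by omega)
  omega

/-- The maximality predicate: `r` is a representative root contained in `S` that is
maximal among such. -/
def IsMaxRoot (p k : ℕ) (S : Set (ZMod (p ^ k))) (r : Set (ZMod (p ^ k))) : Prop :=
  IsRepRoot p k r ∧ r ⊆ S ∧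
    ∀ r', IsRepRoot p k r' → r' ⊆ S → r ⊆ r' → r = r'

/-- Condition (3) for `r` follows from maximality. -/
lemma cond3_of_max (hp : p.Prime) {S r : Set (ZMod (p ^ k))} (hr : IsMaxRoot p k S r)
    (β : ZMod (p ^ k)) (j : ℕ) (hjk : j ≤ k) (hrj : r = repRoot p k β j) (hj1 : 1 ≤ j) :
    ¬ (⋃ b ∈ Finset.range p,
        (fun x => x + (p : ZMod (p ^ k)) ^ (j - 1) * (b : ZMod (p ^ k))) '' r) ⊆ S := by
  haveI : NeZero (p ^ k) := ⟨pow_ne_zero k hp.pos.ne'⟩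
  intro hsub
  rw [hrj, parent_union hp.pos β hj1] at hsub
  have hpar : IsRepRoot p k (repRoot p k β (j - 1)) := ⟨β, j - 1, by omega, rfl⟩
  have hrp : r ⊆ repRoot p k β (j - 1) := by
    rw [hrj]
    exact repRoot_subset_of_le (by omega) (mem_repRoot_self β (j - 1)) (mem_repRoot_self β j)
  have heq := hr.2.2 _ hpar hsub hrp
  have hmem : β + (p : ZMod (p ^ k)) ^ (j - 1) ∈ repRoot p k β (j - 1) := ⟨1, by ring⟩
  rw [← heq, hrj] at hmem
  exact notMem_strict hp hj1 hjk β hmem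

/-- Maximality follows from condition (3). -/
lemma max_of_cond3 (hp : p.Prime) {S r : Set (ZMod (p ^ k))}
    (hrep : IsRepRoot p k r) (hrS : r ⊆ S)
    (h3 : ∀ (β : ZMod (p ^ k)) (j : ℕ), j ≤ k → r = repRoot p k β j → 1 ≤ j →
      ¬ (⋃ b ∈ Finset.range p,
          (fun x => x + (p : ZMod (p ^ k)) ^ (j - 1) * (b : ZMod (p ^ k))) '' r) ⊆ S) :
    IsMaxRoot p k S r := by
  haveI : NeZero (p ^ k) := ⟨pow_ne_zero k hp.pos.ne'⟩
  refine ⟨hrep, hrS, ?_⟩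
  rintro r' ⟨β', j', hj'k, rfl⟩ hr'S hsub
  obtain ⟨β, j, hjk, rfl⟩ := hrep
  have hβ : β ∈ repRoot p k β' j' := hsub (mem_repRoot_self β j)
  rcases le_or_gt j j' with h | h
  · exact Set.Subset.antisymm hsub (repRoot_subset_of_le h (mem_repRoot_self β j) hβ)
  · -- j' < j : the parent of r is inside r' ⊆ S, contradicting condition (3)
    exfalso
    have hj1 : 1 ≤ j := by omega
    apply h3 β j hjk rfl hj1
    rw [parent_union hp.pos β hj1]
    have hpar : repRoot p k β (j - 1) ⊆ repRoot p k β' j' :=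
      repRoot_subset_of_le (by omega) hβ (mem_repRoot_self β (j - 1))
    exact hpar.trans hr'S

end Aux

theorem minimal_rep_unique (p k : ℕ) (hp : p.Prime) (hk : 1 ≤ k)
    (S : Set (ZMod (p ^ k))) :
    ∃! L : Set (Set (ZMod (p ^ k))), IsMinimalRep p k S L := by
  classical
  haveI : NeZero (p ^ k) := ⟨pow_ne_zero k hp.pos.ne'⟩
  -- the canonical representation: all maximal representative roots inside `S`
  set L₀ : Set (Set (ZMod (p ^ k))) := {r | IsMaxRoot p k S r} with hL₀def
  have hmin : IsMinimalRep p k S L₀ := by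
    refine ⟨fun r hr => hr.1, ?_, fun r hr r' hr' hsub => hr.2.2 r' hr'.1 hr'.2.1 hsub,
      fun r hr β j hjk hrj hj1 => cond3_of_max hp hr β j hjk hrj hj1⟩
    apply Set.Subset.antisymm
    · rintro x ⟨r, hr, hxr⟩
      exact hr.2.1 hxr
    · intro x hx
      -- take the minimal `j` with `repRoot x j ⊆ S`
      have hex : ∃ j, j ≤ k ∧ repRoot p k x j ⊆ S := by
        refine ⟨k, le_rfl, ?_⟩
        rintro z ⟨y, rfl⟩
        rwa [pPow_k_eq_zero, zero_mul, add_zero]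
      set j := Nat.find hex with hjdef
      obtain ⟨hjk, hjS⟩ := Nat.find_spec hex
      refine ⟨repRoot p k x j, ?_, mem_repRoot_self x j⟩
      refine ⟨⟨x, j, hjk, rfl⟩, hjS, ?_⟩
      rintro r' ⟨β', j', hj'k, rfl⟩ hr'S hsub
      have hxr' : x ∈ repRoot p k β' j' := hsub (mem_repRoot_self x j)
      rcases le_or_gt j j' with h | h
      · exact Set.Subset.antisymm hsub (repRoot_subset_of_le h (mem_repRoot_self x j) hxr')
      · exfalso
        have h1 : repRoot p k x j' ⊆ repRoot p k β' j' :=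
          repRoot_subset_of_le le_rfl hxr' (mem_repRoot_self x j')
        exact Nat.find_min hex h ⟨by omega, h1.trans hr'S⟩
  refine ⟨L₀, hmin, ?_⟩
  -- uniqueness
  intro L hL
  obtain ⟨h1, h2, h3, h4⟩ := hL
  have hLsub : L ⊆ L₀ := by
    intro r hr
    have hrS : r ⊆ S := h2 ▸ Set.subset_sUnion_of_mem hr
    exact max_of_cond3 hp (h1 r hr) hrS (h4 r hr)
  apply Set.Subset.antisymm hLsub
  intro r hr
  obtain ⟨⟨β, j, hjk, hrj⟩, hrS, hmax⟩ := hr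
  have hβr : β ∈ r := hrj ▸ mem_repRoot_self β j
  have hβS : β ∈ S := hrS hβr
  rw [← h2] at hβS
  obtain ⟨r₀, hr₀L, hβr₀⟩ := hβS
  have hr₀max := hLsub hr₀L
  obtain ⟨β₀, j₀, hj₀k, hr₀⟩ := hr₀max.1
  rcases le_or_gt j j₀ with h | h
  · -- r₀ ⊆ r, so they are equal by maximality of r₀
    have : r₀ ⊆ r := by
      rw [hrj, hr₀]
      exact repRoot_subset_of_le h (hrj ▸ hβr) (hr₀ ▸ hβr₀)
    rwa [hr₀max.2.2 r ⟨β, j, hjk, hrj⟩ hrS this] at hr₀L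
  · -- r ⊆ r₀, so they are equal by maximality of r
    have : r ⊆ r₀ := by
      rw [hrj, hr₀]
      exact repRoot_subset_of_le (le_of_lt h) (hr₀ ▸ hβr₀) (hrj ▸ hβr)
    rw [hmax r₀ ⟨β₀, j₀, hj₀k, hr₀⟩ hr₀max.2.1 this]
    exact hr₀L
end

section
/- Let S ⊆ ℤ be finite with a p-ordering, and let v_p(S, i) denote the i-th term of the associated p-sequence valuation (the p-adic valuation of ∏_{j<i}(a_i - a_j)). Then for any x ∈ ℤ: v_p(x·S, i) = v_p(S, i) + i·v_p(x), and v_p(S + x, i) = v_p(S, i). -/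
/-- `a` is a `p`-ordering of the finite set `S ⊆ ℤ`: the first `S.card` terms of `a`
enumerate `S` without repetition, and each `a i` minimizes the `p`-adic valuation of the
product of its differences with the previously chosen elements, among the remaining
elements of `S`. -/
def IsPOrdering (p : ℕ) (S : Finset ℤ) (a : ℕ → ℤ) : Prop :=
  (∀ i < S.card, a i ∈ S) ∧
  (∀ i < S.card, ∀ j < S.card, a i = a j → i = j) ∧
  (∀ i, 0 < i → i < S.card → ∀ x ∈ S, (∀ j < i, x ≠ a j) →
    padicValInt p (∏ j ∈ Finset.range i, (a i - a j)) ≤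
      padicValInt p (∏ j ∈ Finset.range i, (x - a j)))

open Finset Polynomial

private lemma pvi_le_of_not_dvd {p : ℕ} [Fact p.Prime] {z : ℤ} {n : ℕ}
    (h : ¬ (p : ℤ) ^ (n + 1) ∣ z) : padicValInt p z ≤ n := by
  by_contra hlt
  exact h ((padicValInt_dvd_iff (n + 1) z).2 (Or.inr (not_le.mp hlt)))

private lemma pvi_dvd_of_le {p : ℕ} [Fact p.Prime] {z : ℤ} {n : ℕ}
    (h : n ≤ padicValInt p z) : (p : ℤ) ^ n ∣ z :=
  (padicValInt_dvd_iff n z).2 (Or.inr h)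

/-- p-adic valuation of a power times a nonzero integer. -/
private lemma pvi_pow_mul {p : ℕ} [Fact p.Prime] {x m : ℤ} (hx : x ≠ 0) (hm : m ≠ 0) (i : ℕ) :
    padicValInt p (x ^ i * m) = i * padicValInt p x + padicValInt p m := by
  induction i with
  | zero => simp
  | succ i ih =>
    have hxi : x ^ i * m ≠ 0 := mul_ne_zero (pow_ne_zero _ hx) hm
    have : x ^ (i + 1) * m = x * (x ^ i * m) := by ring
    rw [this, padicValInt.mul hx hxi, ih]
    ring

/-- Newton-basis representation: any integer polynomial of degree `< n` can be expanded
in the basis `∏_{j<m} (X - a j)`, `m < n`. -/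
private lemma newton_rep (a : ℕ → ℤ) :
    ∀ (n : ℕ) (g : ℤ[X]), g.degree < n →
      ∃ c : ℕ → ℤ, g = ∑ m ∈ range n, C (c m) * ∏ j ∈ range m, (X - C (a j)) := by
  intro n
  induction n with
  | zero =>
    intro g hg
    have : g = 0 := degree_eq_bot.mp (Nat.WithBot.lt_zero_iff.mp (by exact_mod_cast hg))
    exact ⟨0, by simp [this]⟩
  | succ n ih =>
    intro g hg
    set P : ℤ[X] := ∏ j ∈ range n, (X - C (a j)) with hP
    have hPmon : P.Monic := monic_prod_of_monic _ _ fun j _ => monic_X_sub_C (a j)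
    have hPdeg : P.natDegree = n := by
      rw [hP, natDegree_prod _ _ fun j _ => (monic_X_sub_C (a j)).ne_zero]
      simp only [natDegree_X_sub_C]
      simp
    have hPdeg' : P.degree = n := by
      rw [degree_eq_natDegree hPmon.ne_zero, hPdeg]
    -- g = g %ₘ P + P * (g /ₘ P), and g /ₘ P is a constant
    have hq : (g /ₘ P).degree ≤ 0 := by
      by_cases h0 : P.degree ≤ g.degree
      · have hadd := degree_add_divByMonic hPmon h0
        rw [hPdeg'] at hadd
        have h1 : (n : WithBot ℕ) + (g /ₘ P).degree < (n : WithBot ℕ) + 1 := by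
          rw [hadd]; exact_mod_cast hg
        have h2 : (g /ₘ P).degree < 1 :=
          (WithBot.add_lt_add_iff_left (by exact_mod_cast WithBot.coe_ne_bot)).mp h1
        exact Nat.WithBot.lt_one_iff_le_zero.mp h2
      · rw [(divByMonic_eq_zero_iff hPmon).2 (not_le.mp h0)]
        simp
    have hr : (g %ₘ P).degree < n := by
      rw [← hPdeg']
      exact degree_modByMonic_lt g hPmon
    obtain ⟨c, hc⟩ := ih (g %ₘ P) hr
    refine ⟨Function.update c n ((g /ₘ P).coeff 0), ?_⟩
    rw [Finset.sum_range_succ, Function.update_self]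
    have hsum : ∑ m ∈ range n, C (Function.update c n ((g /ₘ P).coeff 0) m)
        * ∏ j ∈ range m, (X - C (a j))
        = ∑ m ∈ range n, C (c m) * ∏ j ∈ range m, (X - C (a j)) := by
      refine Finset.sum_congr rfl fun m hm => ?_
      rw [Function.update_of_ne (Nat.ne_of_lt (mem_range.mp hm))]
    rw [hsum, ← hc]
    have : g = g %ₘ P + P * (g /ₘ P) := (modByMonic_add_div g P).symm
    rw [eq_C_of_degree_le_zero hq] at this
    exact this.trans (by ring)

/-- Key lemma (Bhargava): for a `p`-ordering `a` of `S` and any monic integer polynomial `f`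
of degree `k < |S|`, some element of `S` has `v_p(f(s)) ≤ v_p(S, k)`. -/
private lemma key_lemma {p : ℕ} [Fact p.Prime] {S : Finset ℤ} {a : ℕ → ℤ}
    (ha : IsPOrdering p S a) {k : ℕ} (hk : k < S.card)
    (f : ℤ[X]) (hmon : f.Monic) (hdeg : f.natDegree = k) :
    ∃ s ∈ S, ¬ (p : ℤ) ^ (padicValInt p (∏ j ∈ range k, (a k - a j)) + 1) ∣ f.eval s := by
  obtain ⟨hmem, hinj, hmin⟩ := ha
  set v := padicValInt p (∏ j ∈ range k, (a k - a j)) with hv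
  by_contra hcon
  push_neg at hcon
  -- nonzero differences
  have hdiff : ∀ i < S.card, ∀ j < i, a i - a j ≠ 0 := by
    intro i hi j hj h0
    have : i = j := hinj i hi j (hj.trans hi) (sub_eq_zero.mp h0)
    omega
  have hprodne : ∀ i ≤ k, (∏ j ∈ range i, (a i - a j)) ≠ 0 := by
    intro i hi
    exact Finset.prod_ne_zero_iff.mpr fun j hj =>
      hdiff i (lt_of_le_of_lt hi hk) j (mem_range.mp hj)
  -- Newton expansion of f
  have hfdeg : f.degree < (k + 1 : ℕ) := by
    rw [degree_eq_natDegree hmon.ne_zero, hdeg]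
    exact_mod_cast Nat.lt_succ_self k
  obtain ⟨c, hc⟩ := newton_rep a (k + 1) f hfdeg
  -- leading coefficient: c k = 1
  have hck : c k = 1 := by
    have := congrArg (fun q => Polynomial.coeff q k) hc
    simp only [finset_sum_coeff, coeff_C_mul] at this
    rw [Finset.sum_eq_single k] at this
    · have hPk : (∏ j ∈ range k, (X - C (a j)) : ℤ[X]).coeff k = 1 := by
        have hm : (∏ j ∈ range k, (X - C (a j)) : ℤ[X]).Monic :=
          monic_prod_of_monic _ _ fun j _ => monic_X_sub_C (a j)
        have hd : (∏ j ∈ range k, (X - C (a j)) : ℤ[X]).natDegree = k := by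
          rw [natDegree_prod _ _ fun j _ => (monic_X_sub_C (a j)).ne_zero]
          simp only [natDegree_X_sub_C]
          simp
        have h1 := hm.coeff_natDegree
        rwa [hd] at h1
      rw [hPk, mul_one] at this
      rw [← this, ← hdeg]
      exact hmon.coeff_natDegree
    · intro m hm hmk
      have hmlt : m < k := lt_of_le_of_ne (Nat.lt_succ_iff.mp (mem_range.mp hm)) hmk
      have hd : (∏ j ∈ range m, (X - C (a j)) : ℤ[X]).natDegree = m := by
        rw [natDegree_prod _ _ fun j _ => (monic_X_sub_C (a j)).ne_zero]
        simp only [natDegree_X_sub_C]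
        simp
      rw [coeff_eq_zero_of_natDegree_lt (by rw [hd]; exact hmlt), mul_zero]
    · intro h
      exact absurd (mem_range.mpr (Nat.lt_succ_self k)) h
  -- evaluation formula
  have heval : ∀ i ≤ k, f.eval (a i)
      = ∑ m ∈ range (i + 1), c m * ∏ j ∈ range m, (a i - a j) := by
    intro i hik
    rw [hc]
    simp only [eval_finset_sum, eval_mul, eval_C, eval_prod, eval_sub, eval_X]
    refine (Finset.sum_subset (by
      intro t ht
      exact mem_range.mpr (lt_of_lt_of_le (mem_range.mp ht) (by omega))) ?_).symm
    intro m hm hmn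
    have himem : i ∈ range m := by
      rw [mem_range] at hm hmn ⊢
      omega
    rw [Finset.prod_eq_zero himem (by ring), mul_zero]
  -- minimality transfer: for m ≤ i ≤ k, p^(v+1) ∣ c m * P_m(a m) → p^(v+1) ∣ c m * P_m(a i)
  have htransfer : ∀ m i, m ≤ i → i ≤ k →
      (p : ℤ) ^ (v + 1) ∣ c m * ∏ j ∈ range m, (a m - a j) →
      (p : ℤ) ^ (v + 1) ∣ c m * ∏ j ∈ range m, (a i - a j) := by
    intro m i hmi hik hdvd
    by_cases hcm : c m = 0
    · simp [hcm]
    rcases Nat.eq_zero_or_pos m with hm0 | hmpos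
    · subst hm0; simpa using hdvd
    have hPi : (∏ j ∈ range m, (a i - a j)) ≠ 0 :=
      Finset.prod_ne_zero_iff.mpr fun j hj => by
        intro h0
        have hj' := mem_range.mp hj
        exact absurd (hinj i (lt_of_le_of_lt hik hk) j
          (lt_of_lt_of_le (lt_of_lt_of_le hj' hmi) (le_of_lt (lt_of_le_of_lt hik hk)))
          (by linarith [sub_eq_zero.mp h0])) (by omega)
    have hle : padicValInt p (∏ j ∈ range m, (a m - a j))
        ≤ padicValInt p (∏ j ∈ range m, (a i - a j)) := by
      rcases eq_or_lt_of_le hmi with rfl | hmi'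
      · exact le_refl _
      refine hmin m hmpos (lt_of_le_of_lt (le_of_lt (lt_of_lt_of_le hmi' hik)) hk)
        (a i) (hmem i (lt_of_le_of_lt hik hk)) ?_
      intro j hj h0
      exact absurd (hinj i (lt_of_le_of_lt hik hk) j
        (lt_of_lt_of_le (lt_of_lt_of_le hj hmi) (le_of_lt (lt_of_le_of_lt hik hk))) h0)
        (by omega)
    have h1 : v + 1 ≤ padicValInt p (c m * ∏ j ∈ range m, (a m - a j)) := by
      rcases (padicValInt_dvd_iff (v + 1) _).1 hdvd with h0 | h
      · exact absurd h0 (mul_ne_zero hcm (hprodne m (le_trans hmi hik)))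
      · exact h
    rw [padicValInt.mul hcm (hprodne m (le_trans hmi hik))] at h1
    refine pvi_dvd_of_le ?_
    rw [padicValInt.mul hcm hPi]
    omega
  -- strong induction: claim for each i ≤ k
  have main : ∀ i, i ≤ k → (p : ℤ) ^ (v + 1) ∣ c i * ∏ j ∈ range i, (a i - a j) := by
    intro i
    induction i using Nat.strong_induction_on with
    | _ i IH =>
      intro hik
      have he := heval i hik
      rw [Finset.sum_range_succ] at he
      have : c i * ∏ j ∈ range i, (a i - a j)
          = f.eval (a i) - ∑ m ∈ range i, c m * ∏ j ∈ range m, (a i - a j) := by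
        rw [he]; ring
      rw [this]
      refine dvd_sub (hcon (a i) (hmem i (lt_of_le_of_lt hik hk))) ?_
      refine Finset.dvd_sum fun m hm => ?_
      have hmi := mem_range.mp hm
      exact htransfer m i (le_of_lt hmi) hik (IH m hmi (le_trans (le_of_lt hmi) hik))
  -- contradiction at i = k
  have hfinal := main k (le_refl k)
  rw [hck, one_mul] at hfinal
  rcases (padicValInt_dvd_iff (v + 1) _).1 hfinal with h0 | h
  · exact (hprodne k (le_refl k)) h0
  · omega

/-- Bhargava's theorem: the valuation sequence is independent of the choice of p-ordering. -/
private lemma pvi_le_pvi {p : ℕ} [Fact p.Prime] {S : Finset ℤ} {a b : ℕ → ℤ}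
    (ha : IsPOrdering p S a) (hb : IsPOrdering p S b) {k : ℕ} (hk : k < S.card) :
    padicValInt p (∏ j ∈ range k, (b k - b j)) ≤
      padicValInt p (∏ j ∈ range k, (a k - a j)) := by
  rcases Nat.eq_zero_or_pos k with rfl | hkpos
  · simp
  set f : ℤ[X] := ∏ j ∈ range k, (X - C (b j)) with hf
  have hmon : f.Monic := monic_prod_of_monic _ _ fun j _ => monic_X_sub_C (b j)
  have hdeg : f.natDegree = k := by
    rw [hf, natDegree_prod _ _ fun j _ => (monic_X_sub_C (b j)).ne_zero]
    simp only [natDegree_X_sub_C]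
    simp
  obtain ⟨s, hs, hnd⟩ := key_lemma ha hk f hmon hdeg
  have hevals : f.eval s = ∏ j ∈ range k, (s - b j) := by
    simp [hf, eval_prod]
  rw [hevals] at hnd
  have hne : (∏ j ∈ range k, (s - b j)) ≠ 0 := by
    intro h0
    exact hnd (h0 ▸ dvd_zero _)
  have hsb : ∀ j < k, s ≠ b j := by
    intro j hj h0
    exact hne (Finset.prod_eq_zero (mem_range.mpr hj) (by rw [h0]; ring))
  exact le_trans (hb.2.2 k hkpos hk s hs hsb) (pvi_le_of_not_dvd hnd)

private lemma pvi_eq_pvi {p : ℕ} [Fact p.Prime] {S : Finset ℤ} {a b : ℕ → ℤ}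
    (ha : IsPOrdering p S a) (hb : IsPOrdering p S b) {k : ℕ} (hk : k < S.card) :
    padicValInt p (∏ j ∈ range k, (b k - b j)) =
      padicValInt p (∏ j ∈ range k, (a k - a j)) :=
  le_antisymm (pvi_le_pvi ha hb hk) (pvi_le_pvi hb ha hk)

theorem pSequence_scale_and_translate (p : ℕ) (hp : p.Prime) (S : Finset ℤ)
    (x : ℤ) (a b c : ℕ → ℤ)
    (ha : IsPOrdering p S a)
    (hb : IsPOrdering p (S.image (fun s => x * s)) b)
    (hc : IsPOrdering p (S.image (fun s => s + x)) c) :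
    (∀ i < (S.image (fun s => x * s)).card,
      padicValInt p (∏ j ∈ Finset.range i, (b i - b j)) =
        padicValInt p (∏ j ∈ Finset.range i, (a i - a j)) + i * padicValInt p x) ∧
    (∀ i < S.card,
      padicValInt p (∏ j ∈ Finset.range i, (c i - c j)) =
        padicValInt p (∏ j ∈ Finset.range i, (a i - a j))) := by
  haveI : Fact p.Prime := ⟨hp⟩
  constructor
  · -- scaling
    rcases eq_or_ne x 0 with rfl | hx
    · intro i hi
      have hcard : (S.image (fun s => (0 : ℤ) * s)).card ≤ 1 := by
        refine Finset.card_le_one.mpr fun u hu w hw => ?_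
        simp only [Finset.mem_image] at hu hw
        obtain ⟨_, _, rfl⟩ := hu
        obtain ⟨_, _, rfl⟩ := hw
        simp
      have : i = 0 := by omega
      subst this
      simp
    · -- x ≠ 0 : a' = x * a is a p-ordering of x·S
      have hcard : (S.image (fun s => x * s)).card = S.card :=
        Finset.card_image_of_injective _ (mul_right_injective₀ hx)
      have hdiffne : ∀ i < S.card, ∀ j < i, a i - a j ≠ 0 := by
        intro i hi j hj h0
        have : i = j := ha.2.1 i hi j (hj.trans hi) (sub_eq_zero.mp h0)
        omega
      have hprodne : ∀ i < S.card, (∏ j ∈ range i, (a i - a j)) ≠ 0 := fun i hi =>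
        Finset.prod_ne_zero_iff.mpr fun j hj => hdiffne i hi j (mem_range.mp hj)
      have hscaleprod : ∀ (y : ℤ) (i : ℕ),
          (∏ j ∈ range i, (x * y - x * a j)) = x ^ i * ∏ j ∈ range i, (y - a j) := by
        intro y i
        calc (∏ j ∈ range i, (x * y - x * a j))
            = ∏ j ∈ range i, x * (y - a j) :=
              Finset.prod_congr rfl fun j _ => by ring
          _ = x ^ i * ∏ j ∈ range i, (y - a j) := by
              rw [Finset.prod_mul_distrib, Finset.prod_const, card_range]
      have ha' : IsPOrdering p (S.image (fun s => x * s)) (fun j => x * a j) := by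
        refine ⟨?_, ?_, ?_⟩
        · intro i hi
          rw [hcard] at hi
          exact Finset.mem_image.mpr ⟨a i, ha.1 i hi, rfl⟩
        · intro i hi j hj hij
          rw [hcard] at hi hj
          exact ha.2.1 i hi j hj (mul_left_cancel₀ hx hij)
        · intro i hipos hi y hy hyne
          rw [hcard] at hi
          obtain ⟨s, hsS, rfl⟩ := Finset.mem_image.mp hy
          have hsne : ∀ j < i, s ≠ a j := fun j hj h0 =>
            hyne j hj (by rw [h0])
          have h1 := ha.2.2 i hipos hi s hsS hsne
          have hps : (∏ j ∈ range i, (s - a j)) ≠ 0 :=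
            Finset.prod_ne_zero_iff.mpr fun j hj => sub_ne_zero.mpr (hsne j (mem_range.mp hj))
          rw [hscaleprod (a i) i, hscaleprod s i,
            pvi_pow_mul hx (hprodne i hi) i, pvi_pow_mul hx hps i]
          omega
      intro i hi
      rw [pvi_eq_pvi ha' hb hi]
      have hi' : i < S.card := by rwa [hcard] at hi
      show padicValInt p (∏ j ∈ range i, (x * a i - x * a j)) =
        padicValInt p (∏ j ∈ range i, (a i - a j)) + i * padicValInt p x
      rw [hscaleprod (a i) i, pvi_pow_mul hx (hprodne i hi') i]
      omega
  · -- translation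
    have hcard : (S.image (fun s => s + x)).card = S.card :=
      Finset.card_image_of_injective _ (add_left_injective x)
    have hshift : ∀ (y : ℤ) (i : ℕ),
        (∏ j ∈ range i, ((y + x) - (a j + x))) = ∏ j ∈ range i, (y - a j) :=
      fun y i => Finset.prod_congr rfl fun j _ => by ring
    have ha'' : IsPOrdering p (S.image (fun s => s + x)) (fun j => a j + x) := by
      refine ⟨?_, ?_, ?_⟩
      · intro i hi
        rw [hcard] at hi
        exact Finset.mem_image.mpr ⟨a i, ha.1 i hi, rfl⟩
      · intro i hi j hj hij
        rw [hcard] at hi hj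
        exact ha.2.1 i hi j hj (add_left_injective x hij)
      · intro i hipos hi y hy hyne
        rw [hcard] at hi
        obtain ⟨s, hsS, rfl⟩ := Finset.mem_image.mp hy
        have hsne : ∀ j < i, s ≠ a j := fun j hj h0 => hyne j hj (by rw [h0])
        show padicValInt p (∏ j ∈ range i, ((a i + x) - (a j + x))) ≤
          padicValInt p (∏ j ∈ range i, ((s + x) - (a j + x)))
        rw [hshift (a i) i, hshift s i]
        exact ha.2.2 i hipos hi s hsS hsne
    intro i hi
    have hi' : i < (S.image (fun s => s + x)).card := by rwa [hcard]
    rw [pvi_eq_pvi ha'' hc hi']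
    show padicValInt p (∏ j ∈ range i, ((a i + x) - (a j + x))) =
      padicValInt p (∏ j ∈ range i, (a i - a j))
    rw [hshift (a i) i]
end

section
/- The natural numbers 0, 1, 2, 3, ... in increasing order form a p-ordering of ℤ (or of {0,1,...,n-1} for any n), and the associated p-sequence is v_p(ℤ, i) = v_p(i!). -/
lemma descPoch_eval_prod (i : ℕ) (x : ℤ) :
    (descPochhammer ℤ i).eval x = ∏ j ∈ Finset.range i, (x - j) := by
  induction i with
  | zero => simp
  | succ i ih =>
    rw [descPochhammer_succ_right, Finset.prod_range_succ, ← ih]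
    simp

lemma fact_dvd_prod (i : ℕ) (x : ℤ) :
    (i.factorial : ℤ) ∣ ∏ j ∈ Finset.range i, (x - j) := by
  rw [← descPoch_eval_prod, Polynomial.eval_eq_smeval,
    Ring.descPochhammer_eq_factorial_smul_choose]
  exact ⟨Ring.choose x i, by simp [nsmul_eq_mul]⟩

lemma prod_range_sub_eq_factorial (i : ℕ) :
    (∏ j ∈ Finset.range i, ((i : ℤ) - (j : ℤ))) = (i.factorial : ℤ) := by
  rw [← descPoch_eval_prod, descPochhammer_eval_eq_descFactorial ℤ i i,
    Nat.descFactorial_self]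

lemma padicValInt_le_of_dvd (p : ℕ) (hp : p.Prime) {a b : ℤ} (hab : a ∣ b) (hb : b ≠ 0) :
    padicValInt p a ≤ padicValInt p b := by
  haveI : Fact p.Prime := ⟨hp⟩
  rcases (padicValInt_dvd_iff _ _).mp ((padicValInt_dvd (p := p) a).trans hab) with h | h
  · exact absurd h hb
  · exact h

theorem naturals_pOrdering_factorial (p : ℕ) (hp : p.Prime) (n : ℕ) :
    IsPOrdering p ((Finset.range n).image (fun i : ℕ => (i : ℤ))) (fun i : ℕ => (i : ℤ)) ∧
    (∀ i < n,
      padicValInt p (∏ j ∈ Finset.range i, ((i : ℤ) - (j : ℤ))) =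
        padicValInt p (Nat.factorial i : ℤ)) := by
  have hcard : ((Finset.range n).image (fun i : ℕ => (i : ℤ))).card = n := by
    rw [Finset.card_image_of_injective _ (fun a b h => by exact_mod_cast h), Finset.card_range]
  constructor
  · refine ⟨?_, ?_, ?_⟩
    · intro i hi
      rw [hcard] at hi
      exact Finset.mem_image.mpr ⟨i, Finset.mem_range.mpr hi, rfl⟩
    · intro i _ j _ h
      simp only at h
      exact_mod_cast h
    · intro i _ _ x _ hxj
      simp only
      rw [prod_range_sub_eq_factorial]
      apply padicValInt_le_of_dvd p hp (fact_dvd_prod i x)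
      apply Finset.prod_ne_zero_iff.mpr
      intro j hj
      exact sub_ne_zero.mpr (hxj j (Finset.mem_range.mp hj))
  · intro i _
    rw [prod_range_sub_eq_factorial]
end

section
/- Let (a₀, a₁, ...) be a p-ordering of ℤ_{p^{k-j}} (viewed as integers {0,...,p^{k-j}-1}). Then (β + a₀·p^j, β + a₁·p^j, β + a₂·p^j, ...) is a p-ordering of the representative root β + p^j∗ = {β + p^j y | y ∈ ℤ_{p^{k-j}}}. -/
theorem pOrdering_repRoot (p : ℕ) (hp : p.Prime) (k j : ℕ) (hj : j ≤ k) (β : ℤ)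
    (a : ℕ → ℤ)
    (ha : IsPOrdering p ((Finset.range (p ^ (k - j))).image (fun y : ℕ => (y : ℤ))) a) :
    IsPOrdering p
      ((Finset.range (p ^ (k - j))).image (fun y : ℕ => β + (p : ℤ) ^ j * (y : ℤ)))
      (fun i => β + (p : ℤ) ^ j * a i) := by
  haveI : Fact p.Prime := ⟨hp⟩
  obtain ⟨h1, h2, h3⟩ := ha
  have hp0 : (p : ℤ) ≠ 0 := by exact_mod_cast hp.ne_zero
  have hpj : ((p : ℤ) ^ j) ≠ 0 := pow_ne_zero _ hp0
  have hinj : Function.Injective (fun y : ℕ => β + (p : ℤ) ^ j * (y : ℤ)) := by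
    intro x y hxy
    simp only at hxy
    have : (x : ℤ) = y := by
      have := add_left_cancel hxy
      exact mul_left_cancel₀ hpj this
    exact_mod_cast this
  have hcardS : ((Finset.range (p ^ (k - j))).image (fun y : ℕ => (y : ℤ))).card
      = p ^ (k - j) := by
    rw [Finset.card_image_of_injective _ Nat.cast_injective, Finset.card_range]
  have hcardT : ((Finset.range (p ^ (k - j))).image
      (fun y : ℕ => β + (p : ℤ) ^ j * (y : ℤ))).card = p ^ (k - j) := by
    rw [Finset.card_image_of_injective _ hinj, Finset.card_range]
  -- valuation of scaled product
  have hval : ∀ (z : ℤ) (i : ℕ), (∀ l < i, z ≠ a l) →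
      (∀ l < i, a l ∈ (Finset.range (p ^ (k - j))).image (fun y : ℕ => (y : ℤ))) →
      padicValInt p (∏ l ∈ Finset.range i, ((β + (p:ℤ)^j * z) - (β + (p:ℤ)^j * a l)))
        = j * i + padicValInt p (∏ l ∈ Finset.range i, (z - a l)) := by
    intro z i hz _
    have hprod : (∏ l ∈ Finset.range i, ((β + (p:ℤ)^j * z) - (β + (p:ℤ)^j * a l)))
        = (p:ℤ)^(j*i) * ∏ l ∈ Finset.range i, (z - a l) := by
      rw [Finset.prod_congr rfl (fun l _ => by ring_nf : ∀ l ∈ Finset.range i,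
        ((β + (p:ℤ)^j * z) - (β + (p:ℤ)^j * a l)) = (p:ℤ)^j * (z - a l))]
      rw [Finset.prod_mul_distrib, Finset.prod_const, Finset.card_range, ← pow_mul]
    have hne : (∏ l ∈ Finset.range i, (z - a l)) ≠ 0 := by
      apply Finset.prod_ne_zero_iff.mpr
      intro l hl
      exact sub_ne_zero_of_ne (hz l (Finset.mem_range.mp hl))
    rw [hprod, padicValInt.mul (pow_ne_zero _ hp0) hne]
    congr 1
    have : ((p:ℤ)^(j*i)) = ((p^(j*i) : ℕ) : ℤ) := by push_cast; ring
    rw [this, padicValInt.of_nat, padicValNat.prime_pow]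
  refine ⟨?_, ?_, ?_⟩
  · intro i hi
    rw [hcardT] at hi
    have := h1 i (by rwa [hcardS])
    simp only [Finset.mem_image, Finset.mem_range] at this ⊢
    obtain ⟨y, hy, hya⟩ := this
    exact ⟨y, hy, by rw [hya]⟩
  · intro i hi i' hi' heq
    rw [hcardT] at hi hi'
    simp only at heq
    have : a i = a i' := mul_left_cancel₀ hpj (add_left_cancel heq)
    exact h2 i (by rwa [hcardS]) i' (by rwa [hcardS]) this
  · intro i hipos hi x hx hxne
    rw [hcardT] at hi
    simp only [Finset.mem_image, Finset.mem_range] at hx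
    obtain ⟨y, hy, rfl⟩ := hx
    have hySmem : (y : ℤ) ∈ (Finset.range (p ^ (k - j))).image (fun y : ℕ => (y : ℤ)) := by
      simp only [Finset.mem_image, Finset.mem_range]
      exact ⟨y, hy, rfl⟩
    have hyne : ∀ l < i, (y : ℤ) ≠ a l := by
      intro l hl hcontra
      exact hxne l hl (by rw [hcontra])
    have haine : ∀ l < i, a i ≠ a l := by
      intro l hl hcontra
      have := h2 i (by rwa [hcardS]) l (by omega) hcontra
      omega
    have hmem : ∀ l < i, a l ∈ (Finset.range (p ^ (k - j))).image (fun y : ℕ => (y : ℤ)) :=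
      fun l hl => h1 l (by rw [hcardS]; omega)
    have key := h3 i hipos (by rwa [hcardS]) (y : ℤ) hySmem hyne
    have e1 := hval (a i) i haine hmem
    have e2 := hval (y : ℤ) i hyne hmem
    simp only at e1 e2 ⊢
    rw [e1, e2]
    omega
end

section
/- For any two p-orderings of a subset S ⊆ ℤ, the associated p-sequences are the same: the minimum of v_p(∏_{j<i}(x - a_j)) at each step i is independent of the choices made. -/
namespace PSeqUnique

open Polynomial Finset

/-- The basis polynomials `∏_{j<k} (X - a j)`. -/
noncomputable def F (a : ℕ → ℤ) (k : ℕ) : ℤ[X] := ∏ j ∈ Finset.range k, (X - C (a j))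

lemma F_monic (a : ℕ → ℤ) (k : ℕ) : (F a k).Monic :=
  monic_prod_of_monic _ _ fun j _ => monic_X_sub_C (a j)

lemma F_natDegree (a : ℕ → ℤ) (k : ℕ) : (F a k).natDegree = k := by
  rw [F, natDegree_prod]
  · simp only [natDegree_X_sub_C, Finset.sum_const, smul_eq_mul, mul_one, Finset.card_range]
  · intro j _
    exact X_sub_C_ne_zero (a j)

lemma F_eval (a : ℕ → ℤ) (k : ℕ) (x : ℤ) :
    (F a k).eval x = ∏ j ∈ Finset.range k, (x - a j) := by
  simp [F, eval_prod]

/-- Any polynomial of degree `< k` is a `ℤ`-combination of `F a 0, …, F a (k-1)`. -/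
lemma exists_expand (a : ℕ → ℤ) :
    ∀ (k : ℕ) (g : ℤ[X]), g.degree < (k : WithBot ℕ) →
      ∃ c : ℕ → ℤ, g = ∑ j ∈ Finset.range k, C (c j) * F a j := by
  intro k
  induction k with
  | zero =>
      intro g hg
      refine ⟨0, ?_⟩
      have : g = 0 := degree_eq_bot.mp (Nat.WithBot.lt_zero_iff.mp (by exact_mod_cast hg))
      simp [this]
  | succ k ih =>
      intro g hg
      have hF : (F a k).Monic := F_monic a k
      have hdeg : (F a k).degree = (k : WithBot ℕ) := by
        rw [degree_eq_natDegree hF.ne_zero, F_natDegree]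
      have hr : (g %ₘ F a k).degree < (k : WithBot ℕ) := by
        have := degree_modByMonic_lt g hF
        rwa [hdeg] at this
      obtain ⟨c, hc⟩ := ih _ hr
      set qc : ℤ := (g /ₘ F a k).coeff 0 with hqc
      have hq : g /ₘ F a k = C qc := by
        apply eq_C_of_natDegree_eq_zero
        rw [natDegree_divByMonic g hF, F_natDegree]
        have hgk : g.natDegree ≤ k := by
          by_cases h0 : g = 0
          · simp [h0]
          · have := (natDegree_lt_iff_degree_lt h0).mpr hg
            omega
        omega
      refine ⟨Function.update c k qc, ?_⟩
      rw [Finset.sum_range_succ]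
      have hcong : ∀ j ∈ Finset.range k,
          C (Function.update c k qc j) * F a j = C (c j) * F a j := by
        intro j hj
        rw [Function.update_of_ne (by have := Finset.mem_range.mp hj; omega)]
      rw [Finset.sum_congr rfl hcong, ← hc, Function.update_self]
      calc g = g %ₘ F a k + F a k * (g /ₘ F a k) := (modByMonic_add_div g (F a k)).symm
        _ = g %ₘ F a k + C qc * F a k := by rw [hq]; ring

/-- If a monic polynomial of degree `k` is expanded in the basis, the top coefficient is `1`. -/
lemma c_top (a : ℕ → ℤ) (k : ℕ) (g : ℤ[X]) (hm : g.Monic) (hd : g.natDegree = k)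
    (c : ℕ → ℤ) (hc : g = ∑ j ∈ Finset.range (k + 1), C (c j) * F a j) : c k = 1 := by
  have h1 : g.coeff k = 1 := by rw [← hd]; exact hm.coeff_natDegree
  rw [hc, finset_sum_coeff, Finset.sum_range_succ] at h1
  have hz : ∀ j ∈ Finset.range k, (C (c j) * F a j).coeff k = 0 := by
    intro j hj
    rw [coeff_C_mul,
      coeff_eq_zero_of_natDegree_lt (by rw [F_natDegree]; exact Finset.mem_range.mp hj), mul_zero]
  have hFk : (F a k).coeff k = 1 := by
    have := (F_monic a k).coeff_natDegree
    rwa [F_natDegree] at this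
  rw [Finset.sum_eq_zero hz, zero_add, coeff_C_mul, hFk, mul_one] at h1
  exact h1

/-- One-sided comparison: the `p`-sequence of `b` is bounded by the `p`-sequence of `a`. -/
lemma key_le (p : ℕ) (hp : p.Prime) (S : Finset ℤ) (a b : ℕ → ℤ)
    (ha : IsPOrdering p S a) (hb : IsPOrdering p S b) :
    ∀ i < S.card,
      padicValInt p (∏ j ∈ Finset.range i, (b i - b j)) ≤
        padicValInt p (∏ j ∈ Finset.range i, (a i - a j)) := by
  haveI : Fact p.Prime := ⟨hp⟩
  obtain ⟨haS, hainj, hamin⟩ := ha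
  obtain ⟨hbS, hbinj, hbmin⟩ := hb
  set A : ℕ → ℕ := fun i => padicValInt p (∏ j ∈ Finset.range i, (a i - a j)) with hA
  -- the products for `a` are nonzero
  have hprodne : ∀ i < S.card, (∏ j ∈ Finset.range i, (a i - a j)) ≠ 0 := by
    intro i hi
    rw [Finset.prod_ne_zero_iff]
    intro j hj
    refine sub_ne_zero.mpr fun h => ?_
    have := hainj i hi j ((Finset.mem_range.mp hj).trans hi) h
    exact absurd (Finset.mem_range.mp hj) (by omega)
  -- minimality as a divisibility statement, valid for all `x ∈ S`
  have hdvd_min : ∀ i < S.card, ∀ x ∈ S,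
      (p : ℤ) ^ (A i) ∣ ∏ j ∈ Finset.range i, (x - a j) := by
    intro i hi x hx
    by_cases hxe : ∀ j < i, x ≠ a j
    · rcases Nat.eq_zero_or_pos i with h0 | h0
      · subst h0; simp [hA]
      · rw [padicValInt_dvd_iff]
        exact Or.inr (hamin i h0 hi x hx hxe)
    · push_neg at hxe
      obtain ⟨j, hj, hxj⟩ := hxe
      rw [Finset.prod_eq_zero (Finset.mem_range.mpr hj) (by rw [hxj, sub_self])]
      exact dvd_zero _
  -- the `p`-sequence of `a` is nondecreasing
  have hmono : ∀ i j, i ≤ j → j < S.card → A i ≤ A j := by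
    intro i j hij
    induction j, hij using Nat.le_induction with
    | base => intro _; exact le_rfl
    | succ j hij ih =>
        intro hj1
        have hj : j < S.card := by omega
        refine le_trans (ih hj) ?_
        have h1 : (p : ℤ) ^ (A j) ∣ ∏ l ∈ Finset.range j, (a (j + 1) - a l) :=
          hdvd_min j hj (a (j + 1)) (haS (j + 1) hj1)
        have h2 : (p : ℤ) ^ (A j) ∣ ∏ l ∈ Finset.range (j + 1), (a (j + 1) - a l) := by
          rw [Finset.prod_range_succ]
          exact h1.mul_right _
        rcases (padicValInt_dvd_iff _ _).mp h2 with h | h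
        · exact absurd h (hprodne (j + 1) hj1)
        · exact h
  -- key claim: any monic degree-`k` polynomial has some value `g(a m)`, `m ≤ k`,
  -- that is nonzero of valuation at most `A k`
  have key : ∀ k, k < S.card → ∀ g : ℤ[X], g.Monic → g.natDegree = k →
      ∃ m, m ≤ k ∧ g.eval (a m) ≠ 0 ∧ padicValInt p (g.eval (a m)) ≤ A k := by
    intro k hk g hmg hd
    by_contra hcon
    push_neg at hcon
    have H : ∀ m ≤ k, (p : ℤ) ^ (A k + 1) ∣ g.eval (a m) := by
      intro m hm'
      rw [padicValInt_dvd_iff]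
      by_cases h0 : g.eval (a m) = 0
      · exact Or.inl h0
      · exact Or.inr (hcon m hm' h0)
    obtain ⟨c, hc⟩ := exists_expand a (k + 1) g
      (by rw [degree_eq_natDegree hmg.ne_zero, hd]; exact_mod_cast Nat.lt_succ_self k)
    have hck : c k = 1 := c_top a k g hmg hd c hc
    have main : ∀ i, i ≤ k → (p : ℤ) ^ (A k + 1 - A i) ∣ c i := by
      intro i
      induction i using Nat.strong_induction_on with
      | _ i ih =>
        intro hik
        have hiS : i < S.card := lt_of_le_of_lt hik hk
        have hev : g.eval (a i) =
            ∑ j ∈ Finset.range (k + 1), c j * ∏ l ∈ Finset.range j, (a i - a l) := by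
          rw [hc, eval_finset_sum]
          refine Finset.sum_congr rfl fun j _ => ?_
          rw [eval_mul, eval_C, F_eval]
        have hzero : ∀ j ∈ Finset.range (k + 1), j ∉ Finset.range (i + 1) →
            c j * ∏ l ∈ Finset.range j, (a i - a l) = 0 := by
          intro j _ hj
          have hij : i < j := by
            simp only [Finset.mem_range] at hj; omega
          rw [Finset.prod_eq_zero (Finset.mem_range.mpr hij) (sub_self (a i)), mul_zero]
        have hev2 : g.eval (a i) =
            ∑ j ∈ Finset.range (i + 1), c j * ∏ l ∈ Finset.range j, (a i - a l) := by
          rw [hev, ← Finset.sum_subset (Finset.range_subset_range.mpr (by omega)) hzero]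
        rw [Finset.sum_range_succ] at hev2
        have hterm : ∀ j ∈ Finset.range i,
            (p : ℤ) ^ (A k + 1) ∣ c j * ∏ l ∈ Finset.range j, (a i - a l) := by
          intro j hj
          have hj' : j < i := Finset.mem_range.mp hj
          have h1 := ih j hj' (le_trans hj'.le hik)
          have h2 := hdvd_min j (lt_of_lt_of_le hj' (le_of_lt hiS)) (a i) (haS i hiS)
          have hAj : A j ≤ A k := hmono j k (le_trans hj'.le hik) hk
          have h3 := mul_dvd_mul h1 h2
          rwa [← pow_add, Nat.sub_add_cancel (by omega)] at h3
        have hsum : (p : ℤ) ^ (A k + 1) ∣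
            ∑ j ∈ Finset.range i, c j * ∏ l ∈ Finset.range j, (a i - a l) :=
          Finset.dvd_sum hterm
        have hci : (p : ℤ) ^ (A k + 1) ∣ c i * ∏ l ∈ Finset.range i, (a i - a l) := by
          have hHi := H i hik
          rw [hev2] at hHi
          exact (dvd_add_right hsum).mp hHi
        by_cases hci0 : c i = 0
        · simp [hci0]
        · have hne : (∏ l ∈ Finset.range i, (a i - a l)) ≠ 0 := hprodne i hiS
          have hv : A k + 1 ≤ padicValInt p (c i) + A i := by
            rcases (padicValInt_dvd_iff _ _).mp hci with h | h
            · exact absurd h (mul_ne_zero hci0 hne)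
            · rwa [padicValInt.mul hci0 hne] at h
          rw [padicValInt_dvd_iff]
          exact Or.inr (by omega)
    have hfin := main k le_rfl
    rw [hck, Nat.add_sub_cancel_left, pow_one] at hfin
    have : (p : ℤ) = 1 ∨ (p : ℤ) = -1 := Int.isUnit_iff.mp (isUnit_of_dvd_one hfin)
    have hp1 := hp.one_lt
    rcases this with h | h <;> omega
  -- conclude
  intro i hi
  rcases Nat.eq_zero_or_pos i with rfl | hi0
  · simp
  · obtain ⟨m, hmk, hne, hle⟩ := key i hi (F b i) (F_monic b i) (F_natDegree b i)
    rw [F_eval] at hne hle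
    have hmS : a m ∈ S := haS m (lt_of_le_of_lt hmk hi)
    have hdist : ∀ j < i, a m ≠ b j := by
      intro j hj heq
      exact hne (Finset.prod_eq_zero (Finset.mem_range.mpr hj) (by rw [heq, sub_self]))
    exact le_trans (hbmin i hi0 hi (a m) hmS hdist) hle

end PSeqUnique

theorem pSequence_unique (p : ℕ) (hp : p.Prime) (S : Finset ℤ) (a b : ℕ → ℤ)
    (ha : IsPOrdering p S a) (hb : IsPOrdering p S b) :
    ∀ i < S.card,
      padicValInt p (∏ j ∈ Finset.range i, (a i - a j)) =
        padicValInt p (∏ j ∈ Finset.range i, (b i - b j)) := by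
  intro i hi
  exact le_antisymm (PSeqUnique.key_le p hp S b a hb ha i hi)
    (PSeqUnique.key_le p hp S a b ha hb i hi)
end

section
/- Let p be a prime with k < p, and let f ∈ ℤ_{p^k}[x]. Suppose α₀, ..., α_{k-1} are roots of f in ℤ_{p^k} all congruent to j mod p, and pairwise incongruent mod p² (i.e., for i ≠ l, α_i - α_l ≢ 0 mod p²). Then every element of ℤ_{p^k} congruent to j mod p is a root of f. -/
open Polynomial Matrix Finset

theorem roots_in_k_residue_classes_give_full_class
    (p k : ℕ) (hp : p.Prime) (hk : 1 ≤ k) (hkp : k < p)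
    (f : Polynomial (ZMod (p ^ k))) (j : ZMod (p ^ k)) (α : Fin k → ZMod (p ^ k))
    (hroots : ∀ i, f.eval (α i) = 0)
    (hcong : ∀ i, (p : ZMod (p ^ k)) ∣ (α i - j))
    (hpair : ∀ i l, i ≠ l → ¬ ((p : ZMod (p ^ k)) ^ 2 ∣ (α i - α l))) :
    ∀ x : ZMod (p ^ k), (p : ZMod (p ^ k)) ∣ (x - j) → f.eval x = 0 := by
  intro x hx
  haveI : NeZero (p ^ k) := ⟨pow_ne_zero _ hp.pos.ne'⟩
  choose β hβ using hcong
  obtain ⟨y, hy⟩ := hx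
  set q : Polynomial (ZMod (p ^ k)) := Polynomial.C j + Polynomial.C (p : ZMod (p ^ k)) * Polynomial.X with hq
  set g : Polynomial (ZMod (p ^ k)) := f.comp q with hg
  have hpk : (p : ZMod (p ^ k)) ^ k = 0 := by
    rw [← Nat.cast_pow, ZMod.natCast_self]
  -- unit criterion
  have hunit : ∀ d : ZMod (p ^ k), ¬ (p : ZMod (p ^ k)) ∣ d → IsUnit d := by
    intro d hd
    have h1 : ¬ p ∣ d.val := by
      rintro ⟨c, hc⟩
      exact hd ⟨(c : ZMod (p ^ k)), by
        have : ((d.val : ℕ) : ZMod (p ^ k)) = d := by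
          simp [ZMod.natCast_val, ZMod.cast_id]
        rw [← this, hc]; push_cast; ring⟩
    have h2 : Nat.Coprime d.val (p ^ k) :=
      Nat.Coprime.pow_right k (Nat.coprime_comm.mp ((hp.coprime_iff_not_dvd).mpr h1))
    have := (ZMod.isUnit_iff_coprime d.val (p ^ k)).mpr h2
    simpa [ZMod.natCast_val, ZMod.cast_id] using this
  -- coefficient divisibility of q^n
  have hqpow : ∀ n m : ℕ, (p : ZMod (p ^ k)) ^ m ∣ (q ^ n).coeff m := by
    intro n
    induction n with
    | zero =>
      intro m
      cases m with
      | zero => simp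
      | succ m => simp [Polynomial.coeff_one]
    | succ n ih =>
      intro m
      rw [pow_succ', hq, add_mul, Polynomial.coeff_add, Polynomial.coeff_C_mul, mul_assoc]
      apply dvd_add
      · exact Dvd.dvd.mul_left (ih m) _
      · cases m with
        | zero =>
          rw [Polynomial.coeff_C_mul, Polynomial.mul_coeff_zero, Polynomial.coeff_X_zero]
          simp
        | succ m =>
          rw [Polynomial.coeff_C_mul, Polynomial.coeff_X_mul, pow_succ']
          exact mul_dvd_mul_left _ (ih m)
  have hgcoeff : ∀ m, (p : ZMod (p ^ k)) ^ m ∣ g.coeff m := by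
    intro m
    rw [hg, Polynomial.comp_eq_sum_left, Polynomial.sum, Polynomial.finset_sum_coeff]
    apply Finset.dvd_sum
    intro n _
    rw [Polynomial.coeff_C_mul]
    exact Dvd.dvd.mul_left (hqpow n m) _
  have hhigh : ∀ m, k ≤ m → g.coeff m = 0 := by
    intro m hm
    obtain ⟨c, hc⟩ := hgcoeff m
    have hpm : (p : ZMod (p ^ k)) ^ m = 0 := by
      have : (p : ZMod (p ^ k)) ^ m = (p : ZMod (p ^ k)) ^ k * (p : ZMod (p ^ k)) ^ (m - k) := by
        rw [← pow_add]; congr 1; omega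
      rw [this, hpk, zero_mul]
    rw [hc, hpm, zero_mul]
  -- α i = j + p * β i
  have hα : ∀ i, α i = j + (p : ZMod (p ^ k)) * β i := by
    intro i
    have := hβ i
    linear_combination this
  -- β's distinct mod p
  have hβdist : ∀ i l : Fin k, i ≠ l → ¬ (p : ZMod (p ^ k)) ∣ (β i - β l) := by
    intro i l hil ⟨c, hc⟩
    apply hpair i l hil
    refine ⟨c, ?_⟩
    rw [hα i, hα l]
    ring_nf
    linear_combination (p : ZMod (p ^ k)) * hc
  by_cases hg0 : g = 0
  · have : f.eval x = g.eval y := by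
      rw [hg, Polynomial.eval_comp, hq]
      congr 1
      simp only [Polynomial.eval_add, Polynomial.eval_C, Polynomial.eval_mul, Polynomial.eval_X]
      linear_combination hy
    rw [this, hg0, Polynomial.eval_zero]
  -- g has natDegree < k
  have hdeg : g.natDegree < k := by
    by_contra h
    push_neg at h
    exact hg0 (Polynomial.leadingCoeff_eq_zero.mp (hhigh _ h))
  -- Vandermonde system
  set V : Matrix (Fin k) (Fin k) (ZMod (p ^ k)) := Matrix.vandermonde β with hV
  have hVdet : IsUnit V.det := by
    rw [hV, Matrix.det_vandermonde]
    refine Finset.prod_induction _ IsUnit (fun a b => IsUnit.mul) isUnit_one ?_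
    intro i _
    refine Finset.prod_induction _ IsUnit (fun a b => IsUnit.mul) isUnit_one ?_
    intro l hl
    apply hunit
    intro hdvd
    exact hβdist l i (by simp [Finset.mem_Ioi] at hl; exact fun h => (by omega : ¬ i < l) (h ▸ hl)) (by
      obtain ⟨c, hc⟩ := hdvd
      exact ⟨c, hc⟩)
  have hsys : V *ᵥ (fun m : Fin k => g.coeff m) = 0 := by
    funext i
    have hev : g.eval (β i) = 0 := by
      rw [hg, Polynomial.eval_comp, hq]
      simp only [Polynomial.eval_add, Polynomial.eval_C, Polynomial.eval_mul, Polynomial.eval_X]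
      rw [← hα i]
      exact hroots i
    have := Polynomial.eval_eq_sum_range' hdeg (β i)
    rw [hev] at this
    have hsum : ∑ m ∈ Finset.range k, β i ^ m * g.coeff m = 0 := by
      rw [Polynomial.eval_eq_sum_range' hdeg (β i)] at hev
      rw [← hev]
      exact Finset.sum_congr rfl fun m _ => mul_comm _ _
    simp only [Matrix.mulVec, dotProduct, hV, Matrix.vandermonde, Matrix.of_apply,
      Pi.zero_apply]
    rw [Fin.sum_univ_eq_sum_range (fun m => β i ^ m * g.coeff m) k]
    exact hsum
  obtain ⟨u, hu⟩ := (Matrix.isUnit_iff_isUnit_det V).mpr hVdet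
  have h1 : (fun m : Fin k => g.coeff m) = 0 := by
    have h2 : (↑u⁻¹ : Matrix (Fin k) (Fin k) (ZMod (p ^ k))) *ᵥ
        (V *ᵥ (fun m : Fin k => g.coeff m)) =
        (↑u⁻¹ : Matrix (Fin k) (Fin k) (ZMod (p ^ k))) *ᵥ (0 : Fin k → ZMod (p ^ k)) := by
      rw [hsys]
    rwa [Matrix.mulVec_mulVec, ← hu, Units.inv_mul, Matrix.one_mulVec, Matrix.mulVec_zero] at h2
  have hzero : g = 0 := by
    ext m
    rcases lt_or_ge m k with hm | hm
    · have := congrFun h1 ⟨m, hm⟩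
      simpa using this
    · simpa using hhigh m hm
  exact absurd hzero hg0
end

section
/- For a prime p > 2, the root-sets in ℤ_{p²} contained in a fixed residue class j mod p are exactly: the empty set, any singleton {j + pα} for α ∈ {0,...,p-1}, and the full class {j + pα | α ∈ {0,...,p-1}}. In particular there are exactly p + 2 of them. -/
/-- `R` is a root set in the ring `R'` if some polynomial has exactly `R` as its set of roots. -/
def IsRootSet {R' : Type*} [CommRing R'] (R : Set R') : Prop :=
  ∃ f : Polynomial R', ∀ x : R', f.eval x = 0 ↔ x ∈ R

section aux

variable {p : ℕ}

lemma aux_pp : ((p : ZMod (p ^ 2)) * p : ZMod (p ^ 2)) = 0 := by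
  have h : ((p * p : ℕ) : ZMod (p ^ 2)) = 0 := by
    rw [← pow_two]; exact ZMod.natCast_self _
  exact_mod_cast h

lemma aux_psq : ∀ s : ZMod (p ^ 2), ((p : ZMod (p ^ 2)) * s) ^ 2 = 0 := fun s => by
  have h : ((p : ZMod (p ^ 2)) * s) ^ 2 = ((p : ZMod (p ^ 2)) * p) * s ^ 2 := by ring
  rw [h, aux_pp, zero_mul]

lemma aux_dvd (hp : p.Prime) (y : ZMod (p ^ 2)) :
    (p : ZMod (p ^ 2)) ∣ y ↔ p ∣ y.val := by
  haveI : NeZero (p ^ 2) := ⟨pow_ne_zero 2 hp.ne_zero⟩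
  constructor
  · rintro ⟨c, rfl⟩
    rw [ZMod.val_mul]
    refine (Nat.dvd_mod_iff (dvd_pow_self p two_ne_zero)).mpr ?_
    exact Dvd.dvd.mul_right ⟨1, by rw [ZMod.val_natCast_of_lt (by nlinarith [hp.two_le]), mul_one]⟩ _
  · rintro ⟨m, hm⟩
    exact ⟨m, by rw [← ZMod.natCast_zmod_val y, hm]; push_cast; ring⟩

lemma aux_mulp (hp : p.Prime) (c : ZMod (p ^ 2)) :
    (p : ZMod (p ^ 2)) * c = 0 ↔ (p : ZMod (p ^ 2)) ∣ c := by
  haveI : NeZero (p ^ 2) := ⟨pow_ne_zero 2 hp.ne_zero⟩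
  constructor
  · intro h
    rw [aux_dvd hp]
    have h1 : ((p * c.val : ℕ) : ZMod (p ^ 2)) = 0 := by
      push_cast [ZMod.natCast_zmod_val]; exact h
    rw [ZMod.natCast_eq_zero_iff] at h1
    obtain ⟨k, hk⟩ := h1
    exact ⟨k, Nat.eq_of_mul_eq_mul_left hp.pos (by rw [hk]; ring)⟩
  · rintro ⟨e, rfl⟩
    have h := aux_pp (p := p)
    linear_combination e * h

lemma aux_cancel (hp : p.Prime) (t d : ZMod (p ^ 2)) (ht : ¬ (p : ZMod (p ^ 2)) ∣ t)
    (h : (p : ZMod (p ^ 2)) * (t * d) = 0) : (p : ZMod (p ^ 2)) ∣ d := by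
  haveI : NeZero (p ^ 2) := ⟨pow_ne_zero 2 hp.ne_zero⟩
  rw [aux_mulp hp, aux_dvd hp, ZMod.val_mul] at h
  rw [Nat.dvd_mod_iff (dvd_pow_self p two_ne_zero)] at h
  rw [aux_dvd hp] at ht ⊢
  rcases (Nat.Prime.dvd_mul hp).mp h with h' | h'
  · exact absurd h' ht
  · exact h'

lemma aux_sq (hp : p.Prime) (y : ZMod (p ^ 2)) :
    y ^ 2 = 0 ↔ (p : ZMod (p ^ 2)) ∣ y := by
  haveI : NeZero (p ^ 2) := ⟨pow_ne_zero 2 hp.ne_zero⟩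
  constructor
  · intro h
    rw [aux_dvd hp]
    have h2 : ((y.val ^ 2 : ℕ) : ZMod (p ^ 2)) = 0 := by
      push_cast [ZMod.natCast_zmod_val]; exact h
    rw [ZMod.natCast_eq_zero_iff] at h2
    exact hp.dvd_of_dvd_pow (dvd_trans (dvd_pow_self p two_ne_zero) h2)
  · rintro ⟨c, rfl⟩
    exact aux_psq c

/-- key: if a polynomial has two distinct roots in the same class mod p,
then everything in that class is a root. -/
lemma aux_key (hp : p.Prime) (f : Polynomial (ZMod (p ^ 2))) (a b : ZMod (p ^ 2))
    (ha : f.eval a = 0) (hb : f.eval b = 0) (hab : a ≠ b)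
    (hd : (p : ZMod (p ^ 2)) ∣ (b - a)) :
    ∀ x, (p : ZMod (p ^ 2)) ∣ (x - a) → f.eval x = 0 := by
  obtain ⟨t, ht⟩ := hd
  have ht0 : ¬ (p : ZMod (p ^ 2)) ∣ t := by
    intro hpt
    apply hab
    have : (p : ZMod (p ^ 2)) * t = 0 := (aux_mulp hp t).mpr hpt
    have hba : b - a = 0 := by rw [ht, this]
    linear_combination -hba
  have hderiv : (p : ZMod (p ^ 2)) ∣ f.derivative.eval a := by
    apply aux_cancel hp t _ ht0
    obtain ⟨k, hk⟩ := f.binomExpansion a ((p : ZMod (p ^ 2)) * t)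
    have hb' : b = a + (p : ZMod (p ^ 2)) * t := by linear_combination ht
    rw [← hb', hb, ha, aux_psq t] at hk
    linear_combination -hk
  obtain ⟨e, he⟩ := hderiv
  intro x hx
  obtain ⟨s, hs⟩ := hx
  obtain ⟨k, hk⟩ := f.binomExpansion a ((p : ZMod (p ^ 2)) * s)
  have hx' : x = a + (p : ZMod (p ^ 2)) * s := by linear_combination hs
  rw [← hx', ha, aux_psq s, he] at hk
  have hz : (p : ZMod (p ^ 2)) * e * ((p : ZMod (p ^ 2)) * s) = 0 := by
    have := aux_pp (p := p)
    linear_combination (e * s) * this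
  rw [hk, hz]; ring

end aux

theorem rootSets_in_class_Zp2 (p : ℕ) (hp : p.Prime) (hp2 : 2 < p) (j : ZMod (p ^ 2)) :
    (∀ R : Set (ZMod (p ^ 2)), R ⊆ {x | (p : ZMod (p ^ 2)) ∣ (x - j)} →
      (IsRootSet R ↔
        (R = ∅ ∨
         (∃ α : ZMod (p ^ 2), R = {j + (p : ZMod (p ^ 2)) * α}) ∨
         R = {x | (p : ZMod (p ^ 2)) ∣ (x - j)}))) ∧
    Set.ncard {R : Set (ZMod (p ^ 2)) |
        R ⊆ {x | (p : ZMod (p ^ 2)) ∣ (x - j)} ∧ IsRootSet R} = p + 2 := by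
  haveI : NeZero (p ^ 2) := ⟨pow_ne_zero 2 hp.ne_zero⟩
  haveI : Fact (1 < p ^ 2) := ⟨by nlinarith [hp.two_le]⟩
  have hpne : (p : ZMod (p ^ 2)) ≠ 0 := by
    rw [Ne, ZMod.natCast_eq_zero_iff]
    intro hdvd
    have := Nat.le_of_dvd hp.pos hdvd
    nlinarith [hp.two_le]
  have h1 : ∀ R : Set (ZMod (p ^ 2)), R ⊆ {x | (p : ZMod (p ^ 2)) ∣ (x - j)} →
      (IsRootSet R ↔
        (R = ∅ ∨
         (∃ α : ZMod (p ^ 2), R = {j + (p : ZMod (p ^ 2)) * α}) ∨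
         R = {x | (p : ZMod (p ^ 2)) ∣ (x - j)})) := by
    intro R hR
    constructor
    · rintro ⟨f, hf⟩
      rcases Set.eq_empty_or_nonempty R with hRe | ⟨a, haR⟩
      · exact Or.inl hRe
      by_cases hb : ∃ b ∈ R, b ≠ a
      · obtain ⟨b, hbR, hba⟩ := hb
        refine Or.inr (Or.inr ?_)
        apply Set.Subset.antisymm hR
        intro x hx
        rw [← hf]
        have hdba : (p : ZMod (p ^ 2)) ∣ (b - a) := by
          have h1 := hR haR
          have h2 := hR hbR
          have : b - a = (b - j) - (a - j) := by ring
          rw [this]; exact dvd_sub h2 h1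
        refine aux_key hp f a b ((hf a).mpr haR) ((hf b).mpr hbR) (Ne.symm hba) hdba x ?_
        have h1 := hR haR
        have : x - a = (x - j) - (a - j) := by ring
        rw [this]; exact dvd_sub hx h1
      · push_neg at hb
        refine Or.inr (Or.inl ?_)
        obtain ⟨α, hα⟩ := hR haR
        refine ⟨α, ?_⟩
        have haj : a = j + (p : ZMod (p ^ 2)) * α := by linear_combination hα
        ext x
        simp only [Set.mem_singleton_iff, ← haj]
        exact ⟨fun hx => hb x hx, fun hx => hx ▸ haR⟩
    · rintro (rfl | ⟨α, rfl⟩ | rfl)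
      · exact ⟨1, by simp⟩
      · refine ⟨Polynomial.X - Polynomial.C (j + (p : ZMod (p ^ 2)) * α), fun x => ?_⟩
        simp [sub_eq_zero]
      · refine ⟨(Polynomial.X - Polynomial.C j) ^ 2, fun x => ?_⟩
        simp only [Polynomial.eval_pow, Polynomial.eval_sub, Polynomial.eval_X,
          Polynomial.eval_C, Set.mem_setOf_eq]
        exact aux_sq hp (x - j)
  refine ⟨h1, ?_⟩
  -- the counting part
  set cls : Set (ZMod (p ^ 2)) := {x | (p : ZMod (p ^ 2)) ∣ (x - j)} with hcls
  have hjcls : j ∈ cls := by simp [hcls]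
  have hjpcls : j + p ∈ cls := by simp [hcls]
  have hjp : j + (p : ZMod (p ^ 2)) ≠ j := by
    intro h
    exact hpne (by linear_combination h)
  set D : Set (ZMod (p ^ 2)) := {y | (p : ZMod (p ^ 2)) ∣ y} with hD
  set T : Set (Set (ZMod (p ^ 2))) := (fun y => ({j + y} : Set (ZMod (p ^ 2)))) '' D with hT
  have hSeq : {R : Set (ZMod (p ^ 2)) | R ⊆ cls ∧ IsRootSet R}
      = insert ∅ (insert cls T) := by
    ext R
    simp only [Set.mem_setOf_eq, Set.mem_insert_iff, hT, Set.mem_image, hD]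
    constructor
    · rintro ⟨hRs, hRr⟩
      rcases (h1 R hRs).mp hRr with h | ⟨α, rfl⟩ | h
      · exact Or.inl h
      · exact Or.inr (Or.inr ⟨(p : ZMod (p ^ 2)) * α, ⟨α, rfl⟩, rfl⟩)
      · exact Or.inr (Or.inl h)
    · rintro (rfl | rfl | ⟨y, ⟨α, rfl⟩, rfl⟩)
      · exact ⟨Set.empty_subset _, (h1 _ (Set.empty_subset _)).mpr (Or.inl rfl)⟩
      · exact ⟨le_refl _, (h1 _ (le_refl _)).mpr (Or.inr (Or.inr rfl))⟩
      · have hsub : ({j + (p : ZMod (p ^ 2)) * α} : Set (ZMod (p ^ 2))) ⊆ cls := by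
          intro x hx
          rw [Set.mem_singleton_iff] at hx
          subst hx
          simp only [hcls, Set.mem_setOf_eq, add_sub_cancel_left]
          exact ⟨α, rfl⟩
        exact ⟨hsub, (h1 _ hsub).mpr (Or.inr (Or.inl ⟨α, rfl⟩))⟩
  rw [hSeq]
  -- cardinality computations
  have hg : Function.Injective (fun a : ZMod p => ((p * a.val : ℕ) : ZMod (p ^ 2))) := by
    intro a b hab
    haveI : NeZero p := ⟨hp.ne_zero⟩
    have ha2 : p * a.val < p ^ 2 := by
      have := a.val_lt
      nlinarith [hp.pos]
    have hb2 : p * b.val < p ^ 2 := by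
      have := b.val_lt
      nlinarith [hp.pos]
    have : p * a.val = p * b.val := by
      have := congrArg ZMod.val hab
      rwa [ZMod.val_natCast_of_lt ha2, ZMod.val_natCast_of_lt hb2] at this
    exact ZMod.val_injective p (Nat.eq_of_mul_eq_mul_left hp.pos this)
  have hDrange : D = Set.range (fun a : ZMod p => ((p * a.val : ℕ) : ZMod (p ^ 2))) := by
    haveI : NeZero p := ⟨hp.ne_zero⟩
    ext y
    simp only [hD, Set.mem_setOf_eq, Set.mem_range]
    constructor
    · rintro ⟨c, rfl⟩
      refine ⟨(c.val : ZMod p), ?_⟩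
      rw [ZMod.val_natCast]
      have hdm := Nat.div_add_mod c.val p
      have h2 : ((p * (c.val % p) : ℕ) : ZMod (p ^ 2))
          = ((p * c.val : ℕ) : ZMod (p ^ 2)) := by
        have h3 : p * c.val = p * p * (c.val / p) + p * (c.val % p) := by
          nth_rewrite 1 [← hdm]; ring
        rw [h3]
        push_cast
        rw [show ((p : ZMod (p ^ 2)) * p : ZMod (p ^ 2)) = 0 from aux_pp]
        ring
      rw [h2]
      push_cast [ZMod.natCast_zmod_val]
      ring
    · rintro ⟨a, rfl⟩
      exact ⟨(a.val : ZMod (p ^ 2)), by push_cast; ring⟩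
  have hDcard : D.ncard = p := by
    rw [hDrange, ← Set.image_univ, Set.ncard_image_of_injective _ hg, Set.ncard_univ,
      Nat.card_zmod]
  have hTcard : T.ncard = p := by
    rw [hT, Set.ncard_image_of_injective _ (by
      intro y z h
      have := Set.singleton_injective h
      exact add_left_cancel this), hDcard]
  have hTfin : T.Finite := Set.toFinite T
  have hclsT : cls ∉ T := by
    rintro ⟨y, _, hy⟩
    have h1' : j ∈ cls := hjcls
    have h2' : j + p ∈ cls := hjpcls
    rw [← hy, Set.mem_singleton_iff] at h1' h2'
    exact hjp (by rw [← h1'] at h2'; linear_combination h2')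
  have hemp : (∅ : Set (ZMod (p ^ 2))) ∉ insert cls T := by
    rintro (h | ⟨y, _, hy⟩)
    · exact absurd (h ▸ hjcls) (Set.notMem_empty j)
    · exact absurd (hy ▸ rfl : j + y ∈ (∅ : Set (ZMod (p ^ 2)))) (Set.notMem_empty _)
  rw [Set.ncard_insert_of_notMem hemp ((hTfin.insert cls)),
    Set.ncard_insert_of_notMem hclsT hTfin, hTcard]
end

section
/- For a prime p > 3, the number of root-sets of ℤ_{p³} contained in a fixed residue class mod p is (3p² + p + 4)/2. -/
section
variable {p : ℕ}

lemma zmod_int_eq_zero {n : ℤ} : ((n : ZMod (p^3)) = 0) ↔ ((p:ℤ))^3 ∣ n := by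
  rw [ZMod.intCast_zmod_eq_zero_iff_dvd]; push_cast; rfl

lemma dvd_p_iff {n : ℤ} : ((p : ZMod (p^3)) ∣ (n : ZMod (p^3))) ↔ (p:ℤ) ∣ n := by
  constructor
  · rintro ⟨b, hb⟩
    obtain ⟨m, rfl⟩ := ZMod.intCast_surjective b
    have : ((n - p * m : ℤ) : ZMod (p^3)) = 0 := by push_cast; rw [hb]; ring
    rw [zmod_int_eq_zero] at this
    obtain ⟨k, hk⟩ := this
    exact ⟨m + p^2 * k, by linarith⟩
  · rintro ⟨m, rfl⟩; exact ⟨m, by push_cast; ring⟩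

lemma dvd_p2_iff {n : ℤ} : ((p : ZMod (p^3))^2 ∣ (n : ZMod (p^3))) ↔ ((p:ℤ))^2 ∣ n := by
  constructor
  · rintro ⟨b, hb⟩
    obtain ⟨m, rfl⟩ := ZMod.intCast_surjective b
    have : ((n - p^2 * m : ℤ) : ZMod (p^3)) = 0 := by push_cast; rw [hb]; ring
    rw [zmod_int_eq_zero] at this
    obtain ⟨k, hk⟩ := this
    exact ⟨m + p * k, by linarith⟩
  · rintro ⟨m, rfl⟩; exact ⟨m, by push_cast; ring⟩

end

open Polynomial in
lemma taylor_expand (p : ℕ) (F : Polynomial ℤ) (J : ℤ) :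
    ∃ c₀ c₁ c₂ : ℤ, ∀ y : ℤ,
      ((p:ℤ))^3 ∣ F.eval (J + p*y) - (c₀ + c₁*(p*y) + c₂*(p*y)^2) := by
  set g := taylor J F with hg
  set r := g %ₘ (X^3 : Polynomial ℤ) with hr
  refine ⟨r.coeff 0, r.coeff 1, r.coeff 2, fun y => ?_⟩
  have hmonic : (X^3 : Polynomial ℤ).Monic := monic_X_pow 3
  have hdeg : r.natDegree < 3 := by
    rcases eq_or_ne r 0 with h | h
    · simp [h]
    · have := degree_modByMonic_lt g hmonic
      rw [degree_X_pow] at this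
      exact (natDegree_lt_iff_degree_lt h).2 (by exact_mod_cast this)
  have hsum : r.eval (p*y) = r.coeff 0 + r.coeff 1 * (p*y) + r.coeff 2 * (p*y)^2 := by
    rw [eval_eq_sum_range' hdeg]
    simp [Finset.sum_range_succ]
  have key : F.eval (J + p*y) = ((p:ℤ)*y)^3 * (g /ₘ (X^3)).eval (p*y) + r.eval (p*y) := by
    have h1 : g.eval ((p:ℤ)*y) = F.eval ((p:ℤ)*y + J) := taylor_eval J F (p*y)
    have h2 : r + X^3 * (g /ₘ X^3) = g := modByMonic_add_div g (X^3)
    have := congrArg (Polynomial.eval ((p:ℤ)*y)) h2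
    simp only [eval_add, eval_mul, eval_pow, eval_X] at this
    rw [add_comm J, ← h1, ← this]; ring
  rw [key, hsum]
  refine ⟨y^3 * (g /ₘ (X^3)).eval (p*y), by ring⟩

def RFull (p : ℕ) (j : ZMod (p^3)) : Set (ZMod (p^3)) := {x | (p : ZMod (p^3)) ∣ x - j}

def RCl (p : ℕ) (j : ZMod (p^3)) (α : ZMod p) : Set (ZMod (p^3)) :=
  {x | (p : ZMod (p^3))^2 ∣ x - j - p * (α.val : ZMod (p^3))}

section
variable {p : ℕ} (hp : p.Prime) {j : ZMod (p^3)} {J : ℤ} (hJ : (J : ZMod (p^3)) = j)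

include hJ

lemma mem_RFull_iff {n : ℤ} : ((n : ZMod (p^3)) ∈ RFull p j) ↔ (p:ℤ) ∣ n - J := by
  have : ((n : ZMod (p^3)) - j) = ((n - J : ℤ) : ZMod (p^3)) := by push_cast [hJ]; ring
  rw [RFull, Set.mem_setOf_eq, this, dvd_p_iff]

lemma mem_RCl_iff {n : ℤ} {α : ZMod p} :
    ((n : ZMod (p^3)) ∈ RCl p j α) ↔ ((p:ℤ))^2 ∣ n - J - p * (α.val : ℤ) := by
  have : ((n : ZMod (p^3)) - j - p * (α.val : ZMod (p^3)))
      = ((n - J - p * (α.val : ℤ) : ℤ) : ZMod (p^3)) := by push_cast [hJ]; ring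
  rw [RCl, Set.mem_setOf_eq, this, dvd_p2_iff]

end

section
variable {p : ℕ} (hp : p.Prime)

include hp

lemma p_ne_zero' : (p : ZMod (p^3)) ≠ 0 := by
  haveI : NeZero (p^3) := ⟨pow_ne_zero _ hp.pos.ne'⟩
  intro h
  rw [ZMod.natCast_eq_zero_iff] at h
  have h1 := Nat.le_of_dvd hp.pos h
  have h2 : p^1 < p^3 := Nat.pow_lt_pow_right hp.one_lt (by norm_num)
  simp at h2; omega

lemma p2_ne_zero' : (p : ZMod (p^3))^2 ≠ 0 := by
  haveI : NeZero (p^3) := ⟨pow_ne_zero _ hp.pos.ne'⟩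
  intro h
  have h' : ((p^2 : ℕ) : ZMod (p^3)) = 0 := by push_cast; exact h
  rw [ZMod.natCast_eq_zero_iff] at h'
  have h1 := Nat.le_of_dvd (pow_pos hp.pos 2) h'
  have h2 : p^2 < p^3 := Nat.pow_lt_pow_right hp.one_lt (by norm_num)
  omega

lemma pair_dvd {R S n : ℤ} (h : (p:ℤ) ∣ R - S) :
    ((p:ℤ))^3 ∣ (n-R)*(n-S) ↔ ((p:ℤ))^2 ∣ n-R ∨ ((p:ℤ))^2 ∣ n-S := by
  have hpI : Prime (p:ℤ) := Nat.prime_iff_prime_int.1 hp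
  obtain ⟨t, ht⟩ := h
  constructor
  · intro hdvd
    by_contra hcon
    push_neg at hcon
    obtain ⟨h1, h2⟩ := hcon
    by_cases hpn : (p:ℤ) ∣ n - R
    · obtain ⟨u, hu⟩ := hpn
      have hnS : n - S = (p:ℤ) * (u + t) := by linear_combination hu + ht
      have hu' : ¬ (p:ℤ) ∣ u := fun ⟨w, hw⟩ => h1 ⟨w, by linear_combination hu + (p:ℤ)*hw⟩
      have hut : ¬ (p:ℤ) ∣ (u + t) := fun ⟨w, hw⟩ => h2 ⟨w, by linear_combination hnS + (p:ℤ)*hw⟩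
      have : (p:ℤ) ∣ u * (u + t) := by
        have hd2 : (p:ℤ)^3 ∣ (p:ℤ)^2 * (u * (u+t)) := by
          have he : (n-R)*(n-S) = (p:ℤ)^2 * (u*(u+t)) := by rw [hu, hnS]; ring
          rwa [he] at hdvd
        obtain ⟨w, hw⟩ := hd2
        refine ⟨w, ?_⟩
        have hp2 : ((p:ℤ))^2 ≠ 0 := pow_ne_zero _ (by exact_mod_cast hp.pos.ne')
        have : (p:ℤ)^2 * (u * (u+t)) = (p:ℤ)^2 * ((p:ℤ) * w) := by rw [hw]; ring
        exact mul_left_cancel₀ hp2 this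
      rcases hpI.dvd_mul.mp this with h | h
      · exact hu' h
      · exact hut h
    · have hpS : ¬ (p:ℤ) ∣ n - S := fun ⟨w, hw⟩ => hpn ⟨w - t, by linear_combination hw - ht⟩
      have : (p:ℤ) ∣ (n-R)*(n-S) := dvd_trans (dvd_pow_self _ (by norm_num)) hdvd
      rcases hpI.dvd_mul.mp this with h | h
      · exact hpn h
      · exact hpS h
  · rintro (⟨u, hu⟩ | ⟨u, hu⟩)
    · exact ⟨u * ((p:ℤ) * u + t), by linear_combination ((n - S) + (p:ℤ)^2*u) * hu + ((p:ℤ)^2*u) * ht⟩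
    · exact ⟨((p:ℤ) * u - t) * u, by linear_combination ((n - R) + (p:ℤ)^2*u) * hu - ((p:ℤ)^2*u) * ht⟩

end

section
variable {p : ℕ} (hp : p.Prime) {j : ZMod (p^3)} {J : ℤ} (hJ : (J : ZMod (p^3)) = j)

include hp

lemma rootset_empty' : IsRootSet (∅ : Set (ZMod (p^3))) := by
  refine ⟨1, fun x => ?_⟩
  simp only [Polynomial.eval_one, Set.mem_empty_iff_false, iff_false]
  intro h
  have h' : ((1:ℤ) : ZMod (p^3)) = 0 := by exact_mod_cast h
  rw [zmod_int_eq_zero] at h'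
  have h1 := Int.le_of_dvd one_pos h'
  have h2 : (2:ℤ) ≤ (p:ℤ) := by exact_mod_cast hp.two_le
  have h3 : (2:ℤ)^3 ≤ (p:ℤ)^3 := pow_le_pow_left₀ (by norm_num) h2 3
  norm_num at h3
  linarith

lemma rootset_full' : IsRootSet (RFull p j) := by
  refine ⟨Polynomial.C ((p : ZMod (p^3))^2) * (Polynomial.X - Polynomial.C j), fun x => ?_⟩
  obtain ⟨n, rfl⟩ := ZMod.intCast_surjective x
  obtain ⟨J, hJ⟩ := ZMod.intCast_surjective j
  simp only [Polynomial.eval_mul, Polynomial.eval_C, Polynomial.eval_sub, Polynomial.eval_X]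
  rw [mem_RFull_iff hJ]
  have hrw : ((p : ZMod (p^3)))^2 * ((n : ZMod (p^3)) - j) = (((p:ℤ)^2 * (n - J) : ℤ) : ZMod (p^3)) := by
    push_cast [hJ]; ring
  rw [hrw, zmod_int_eq_zero]
  constructor
  · rintro ⟨m, hm⟩
    refine ⟨m, ?_⟩
    have hp2 : ((p:ℤ))^2 ≠ 0 := pow_ne_zero _ (by exact_mod_cast hp.pos.ne')
    apply mul_left_cancel₀ hp2
    rw [hm]; ring
  · rintro ⟨m, hm⟩
    exact ⟨m, by rw [hm]; ring⟩

lemma rootset_singleton' (r : ZMod (p^3)) : IsRootSet ({r} : Set (ZMod (p^3))) := by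
  refine ⟨Polynomial.X - Polynomial.C r, fun x => ?_⟩
  simp [sub_eq_zero]

lemma rootset_pair' (α β : ZMod p) : IsRootSet (RCl p j α ∪ RCl p j β) := by
  refine ⟨(Polynomial.X - Polynomial.C (j + p * (α.val : ZMod (p^3)))) *
      (Polynomial.X - Polynomial.C (j + p * (β.val : ZMod (p^3)))), fun x => ?_⟩
  obtain ⟨n, rfl⟩ := ZMod.intCast_surjective x
  obtain ⟨J, hJ⟩ := ZMod.intCast_surjective j
  simp only [Polynomial.eval_mul, Polynomial.eval_sub, Polynomial.eval_X, Polynomial.eval_C]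
  have hrw : ((n : ZMod (p^3)) - (j + p * (α.val : ZMod (p^3)))) *
      ((n : ZMod (p^3)) - (j + p * (β.val : ZMod (p^3))))
      = (((n - (J + p * (α.val : ℤ))) * (n - (J + p * (β.val : ℤ))) : ℤ) : ZMod (p^3)) := by
    push_cast [hJ]; ring
  have hd : (p:ℤ) ∣ (J + p * (α.val : ℤ)) - (J + p * (β.val : ℤ)) :=
    ⟨(α.val : ℤ) - (β.val : ℤ), by ring⟩
  rw [hrw, zmod_int_eq_zero, pair_dvd hp hd, Set.mem_union, mem_RCl_iff hJ, mem_RCl_iff hJ,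
    sub_sub, sub_sub]

lemma RCl_subset_RFull (α : ZMod p) : RCl p j α ⊆ RFull p j := by
  intro x hx
  rw [RCl, Set.mem_setOf_eq] at hx
  rw [RFull, Set.mem_setOf_eq]
  have h1 : (p : ZMod (p^3)) ∣ x - j - p * (α.val : ZMod (p^3)) :=
    dvd_trans (dvd_pow_self _ two_ne_zero) hx
  have h2 : (p : ZMod (p^3)) ∣ (p : ZMod (p^3)) * (α.val : ZMod (p^3)) := Dvd.intro _ rfl
  have := dvd_add h1 h2
  simpa using this

end

lemma char_rootsets {p : ℕ} (hp : p.Prime) {j : ZMod (p^3)}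
    (R : Set (ZMod (p^3))) (hsub : R ⊆ RFull p j) (hroot : IsRootSet R) :
    R = ∅ ∨ R = RFull p j ∨ (∃ r ∈ RFull p j, R = {r}) ∨
      (∃ α β : ZMod p, R = RCl p j α ∪ RCl p j β) := by
  classical
  haveI : NeZero p := ⟨hp.pos.ne'⟩
  haveI := Fact.mk hp
  obtain ⟨f, hf⟩ := hroot
  obtain ⟨F, rfl⟩ := Polynomial.map_surjective (Int.castRingHom (ZMod (p^3)))
    ZMod.intCast_surjective f
  obtain ⟨J, hJ⟩ := ZMod.intCast_surjective j
  obtain ⟨c₀, c₁, c₂, hc⟩ := taylor_expand p F J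
  have hpI : Prime ((p:ℤ)) := Nat.prime_iff_prime_int.1 hp
  have hp0 : ((p:ℤ)) ≠ 0 := by exact_mod_cast hp.pos.ne'
  have crit : ∀ y : ℤ, (((J + p*y : ℤ) : ZMod (p^3)) ∈ R) ↔
      (p:ℤ)^3 ∣ c₀ + c₁*(p*y) + c₂*(p*y)^2 := by
    intro y
    rw [← hf]
    simp only [Polynomial.eval_intCast_map, eq_intCast, zmod_int_eq_zero]
    constructor
    · intro h; simpa using dvd_sub h (hc y)
    · intro h; simpa using dvd_add (hc y) h
  have memFull : ∀ x ∈ R, ∃ y : ℤ, x = ((J + p*y : ℤ) : ZMod (p^3)) := by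
    intro x hx
    obtain ⟨n, rfl⟩ := ZMod.intCast_surjective x
    obtain ⟨y, hy⟩ := (mem_RFull_iff hJ).1 (hsub hx)
    exact ⟨y, by rw [show J + (p:ℤ)*y = n by linarith]⟩
  by_cases hc1 : (p:ℤ) ∣ c₁
  · -- c₁ divisible by p : union-of-classes case
    obtain ⟨e, rfl⟩ := hc1
    have crit2 : ∀ y : ℤ, (((J + p*y : ℤ) : ZMod (p^3)) ∈ R) ↔
        (p:ℤ)^3 ∣ c₀ + (p:ℤ)^2*(e*y + c₂*y^2) := by
      intro y
      rw [crit y, show c₀ + ((p:ℤ)*e)*((p:ℤ)*y) + c₂*((p:ℤ)*y)^2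
        = c₀ + (p:ℤ)^2*(e*y + c₂*y^2) by ring]
    by_cases hall : ∀ y : ℤ, (p:ℤ)^3 ∣ c₀ + (p:ℤ)^2*(e*y + c₂*y^2)
    · right; left
      apply Set.Subset.antisymm hsub
      intro x hx
      obtain ⟨n, rfl⟩ := ZMod.intCast_surjective x
      obtain ⟨y, hy⟩ := (mem_RFull_iff hJ).1 hx
      have hxy : ((n : ℤ) : ZMod (p^3)) = ((J + p*y : ℤ) : ZMod (p^3)) := by
        rw [show J + (p:ℤ)*y = n by linarith]
      rw [hxy]
      exact (crit2 y).2 (hall y)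
    by_cases hnone : ∀ y : ℤ, ¬ (p:ℤ)^3 ∣ c₀ + (p:ℤ)^2*(e*y + c₂*y^2)
    · left
      rw [Set.eq_empty_iff_forall_notMem]
      intro x hx
      obtain ⟨y, rfl⟩ := memFull x hx
      exact hnone y ((crit2 y).1 hx)
    -- mixed case
    push_neg at hall hnone
    obtain ⟨y₂, hy₂⟩ := hall
    obtain ⟨y₁, hy₁⟩ := hnone
    right; right; right
    have hc₀ : (p:ℤ)^2 ∣ c₀ := by
      have h2 : (p:ℤ)^2 ∣ c₀ + (p:ℤ)^2*(e*y₁ + c₂*y₁^2) :=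
        dvd_trans (pow_dvd_pow _ (by norm_num)) hy₁
      have h3 := dvd_sub h2 ⟨e*y₁ + c₂*y₁^2, rfl⟩
      rwa [add_sub_cancel_right] at h3
    obtain ⟨d, hd⟩ := hc₀
    have crit3 : ∀ y : ℤ, ((p:ℤ)^3 ∣ c₀ + (p:ℤ)^2*(e*y + c₂*y^2)) ↔
        (p:ℤ) ∣ d + e*y + c₂*y^2 := by
      intro y
      constructor
      · rintro ⟨w, hw⟩
        refine ⟨w, ?_⟩
        apply mul_left_cancel₀ (pow_ne_zero 2 hp0)
        linear_combination hw - hd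
      · rintro ⟨w, hw⟩
        exact ⟨w, by linear_combination (p:ℤ)^2 * hw + hd⟩
    set q : Polynomial (ZMod p) :=
      Polynomial.C ((c₂ : ZMod p)) * Polynomial.X^2 + Polynomial.C ((e : ZMod p)) * Polynomial.X
        + Polynomial.C ((d : ZMod p)) with hq
    have qeval : ∀ y : ℤ, q.eval ((y : ZMod p)) = (((d + e*y + c₂*y^2 : ℤ)) : ZMod p) := by
      intro y
      simp only [hq, Polynomial.eval_add, Polynomial.eval_mul, Polynomial.eval_pow,
        Polynomial.eval_C, Polynomial.eval_X]
      push_cast; ring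
    have crit4 : ∀ y : ℤ, ((p:ℤ)^3 ∣ c₀ + (p:ℤ)^2*(e*y + c₂*y^2)) ↔
        q.eval ((y : ZMod p)) = 0 := by
      intro y
      rw [crit3 y, qeval y, ZMod.intCast_zmod_eq_zero_iff_dvd]
    have hq0 : q ≠ 0 := by
      intro h
      exact hy₂ ((crit4 y₂).2 (by rw [h]; simp))
    -- roots analysis
    set t : Finset (ZMod p) := q.roots.toFinset with htdef
    have htcard : t.card ≤ 2 := by
      refine le_trans (Multiset.toFinset_card_le _) (le_trans (Polynomial.card_roots' q) ?_)
      exact Polynomial.natDegree_quadratic_le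
    have hmemt : ∀ γ : ZMod p, q.eval γ = 0 → γ ∈ t := by
      intro γ h
      rw [htdef, Multiset.mem_toFinset, Polynomial.mem_roots']
      exact ⟨hq0, h⟩
    have hevalt : ∀ γ ∈ t, q.eval γ = 0 := by
      intro γ h
      rw [htdef, Multiset.mem_toFinset, Polynomial.mem_roots'] at h
      exact h.2
    have htne : t.Nonempty := ⟨(y₁ : ZMod p), hmemt _ ((crit4 y₁).1 hy₁)⟩
    obtain ⟨α, β, hrα, hrβ, hcover⟩ :
        ∃ α β : ZMod p, q.eval α = 0 ∧ q.eval β = 0 ∧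
          (∀ γ : ZMod p, q.eval γ = 0 → γ = α ∨ γ = β) := by
      rcases Nat.lt_or_ge t.card 2 with h | h
      · have h1 : t.card = 1 := le_antisymm (by omega) (Finset.card_pos.2 htne)
        obtain ⟨a, ha⟩ := Finset.card_eq_one.1 h1
        refine ⟨a, a, hevalt a (by simp [ha]), hevalt a (by simp [ha]), fun γ hγ => ?_⟩
        have := hmemt γ hγ
        rw [ha, Finset.mem_singleton] at this
        exact Or.inl this
      · have h2 : t.card = 2 := le_antisymm htcard h
        obtain ⟨a, b, hab, hab2⟩ := Finset.card_eq_two.1 h2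
        refine ⟨a, b, hevalt a (by simp [hab2]), hevalt b (by simp [hab2]), fun γ hγ => ?_⟩
        have := hmemt γ hγ
        rw [hab2, Finset.mem_insert, Finset.mem_singleton] at this
        exact this
    refine ⟨α, β, ?_⟩
    ext x
    constructor
    · intro hx
      obtain ⟨y, rfl⟩ := memFull x hx
      have h0 := (crit4 y).1 ((crit2 y).1 hx)
      have hdvd : ∀ γ : ZMod p, (y : ZMod p) = γ → (p:ℤ)^2 ∣ (J + p*y) - J - p*(γ.val : ℤ) := by
        intro γ hγ
        have : (((y - (γ.val:ℤ)) : ℤ) : ZMod p) = 0 := by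
          push_cast
          rw [hγ, ZMod.natCast_val, ZMod.cast_id]
          ring
        rw [ZMod.intCast_zmod_eq_zero_iff_dvd] at this
        obtain ⟨w, hw⟩ := this
        exact ⟨w, by linear_combination (p:ℤ)*hw⟩
      rcases hcover _ h0 with hγ | hγ
      · exact Or.inl ((mem_RCl_iff hJ).2 (hdvd α hγ))
      · exact Or.inr ((mem_RCl_iff hJ).2 (hdvd β hγ))
    · intro hx
      have key : ∀ γ : ZMod p, q.eval γ = 0 → x ∈ RCl p j γ → x ∈ R := by
        intro γ hγ hxγ
        obtain ⟨n, rfl⟩ := ZMod.intCast_surjective x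
        obtain ⟨m, hm⟩ := (mem_RCl_iff hJ).1 hxγ
        set y : ℤ := (γ.val:ℤ) + p*m with hy
        have hn : (n : ℤ) = J + p*y := by rw [hy]; linear_combination hm
        have hcast : ((y : ℤ) : ZMod p) = γ := by
          rw [hy]; push_cast
          rw [ZMod.natCast_val, ZMod.cast_id, ZMod.natCast_self]
          ring
        have hxy : ((n : ℤ) : ZMod (p^3)) = ((J + p*y : ℤ) : ZMod (p^3)) := by rw [hn]
        rw [hxy]
        exact (crit2 y).2 ((crit4 y).2 (by rw [hcast]; exact hγ))
      rcases hx with hx | hx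
      · exact key α hrα hx
      · exact key β hrβ hx
  · -- c₁ not divisible by p : empty or singleton
    rcases Set.eq_empty_or_nonempty R with h | ⟨x₀, hx₀⟩
    · exact Or.inl h
    right; right; left
    obtain ⟨y₀, hy₀⟩ := memFull x₀ hx₀
    subst hy₀
    refine ⟨_, hsub hx₀, ?_⟩
    ext x
    simp only [Set.mem_singleton_iff]
    constructor
    · intro hx
      obtain ⟨y, rfl⟩ := memFull x hx
      have h1 := (crit y).1 hx
      have h2 := (crit y₀).1 hx₀
      have hdiff : (p:ℤ)^3 ∣ (p:ℤ) * ((y - y₀) * (c₁ + c₂ * (p:ℤ) * (y + y₀))) := by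
        have heq : (c₀ + c₁*((p:ℤ)*y) + c₂*((p:ℤ)*y)^2) - (c₀ + c₁*((p:ℤ)*y₀) + c₂*((p:ℤ)*y₀)^2)
            = (p:ℤ) * ((y - y₀)*(c₁ + c₂*(p:ℤ)*(y+y₀))) := by ring
        rw [← heq]
        exact dvd_sub h1 h2
      set u : ℤ := c₁ + c₂*(p:ℤ)*(y+y₀) with hu
      have hpu : ¬ (p:ℤ) ∣ u := by
        rintro ⟨w, hw⟩
        exact hc1 ⟨w - c₂*(y+y₀), by linear_combination hw⟩
      have h3 : (p:ℤ)^2 ∣ (y - y₀) * u := by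
        obtain ⟨w, hw⟩ := hdiff
        exact ⟨w, mul_left_cancel₀ hp0 (by linear_combination hw)⟩
      have h4 : (p:ℤ) ∣ (y - y₀) := by
        have hh : (p:ℤ) ∣ (y-y₀)*u := dvd_trans (dvd_pow_self _ two_ne_zero) h3
        rcases hpI.dvd_mul.mp hh with h | h
        · exact h
        · exact absurd h hpu
      obtain ⟨z, hz⟩ := h4
      have h5 : (p:ℤ) ∣ z * u := by
        obtain ⟨w, hw⟩ := h3
        refine ⟨w, ?_⟩
        apply mul_left_cancel₀ hp0
        linear_combination hw - u*hz
      have h6 : (p:ℤ) ∣ z := by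
        rcases hpI.dvd_mul.mp h5 with h | h
        · exact h
        · exact absurd h hpu
      obtain ⟨w, hw⟩ := h6
      have hzero : (((J + p*y) - (J + p*y₀) : ℤ) : ZMod (p^3)) = 0 := by
        rw [zmod_int_eq_zero]
        exact ⟨w, by linear_combination (p:ℤ)*hz + (p:ℤ)^2*hw⟩
      have : ((J + p*y : ℤ) : ZMod (p^3)) - ((J + p*y₀ : ℤ) : ZMod (p^3)) = 0 := by
        rw [← hzero]; push_cast; ring
      rw [sub_eq_zero] at this
      exact this
    · intro h; rw [h]; exact hx₀

section
variable {p : ℕ} (hp : p.Prime) {j : ZMod (p^3)} {J : ℤ} (hJ : (J : ZMod (p^3)) = j)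

lemma cast_eq_iff_mod {A B : ℤ} : ((A : ZMod (p^3)) = (B : ZMod (p^3))) ↔ (p:ℤ)^3 ∣ (A - B) := by
  rw [← sub_eq_zero, show (A : ZMod (p^3)) - B = ((A - B : ℤ) : ZMod (p^3)) by push_cast; ring,
    zmod_int_eq_zero]

include hp

lemma not_dvd_p3_p2 : ¬ (p:ℤ)^3 ∣ (p:ℤ)^2 := by
  intro h
  have h1 : (1:ℤ) < (p:ℤ) := by exact_mod_cast hp.one_lt
  have h2 : (p:ℤ)^2 < (p:ℤ)^3 := pow_lt_pow_right₀ h1 (by norm_num)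
  have h3 := Int.le_of_dvd (by positivity) h
  linarith

lemma not_dvd_p3_p1 : ¬ (p:ℤ)^3 ∣ (p:ℤ) := by
  intro h
  have h1 : (1:ℤ) < (p:ℤ) := by exact_mod_cast hp.one_lt
  have h2 : (p:ℤ)^1 < (p:ℤ)^3 := pow_lt_pow_right₀ h1 (by norm_num)
  have h3 := Int.le_of_dvd (by positivity) h
  simp at h2
  linarith

include hJ

lemma mem_RCl_self (α : ZMod p) : ((J + p*(α.val:ℤ) : ℤ) : ZMod (p^3)) ∈ RCl p j α :=
  (mem_RCl_iff hJ).2 ⟨0, by ring⟩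

lemma mem_RCl_self' (α : ZMod p) : ((J + p*(α.val:ℤ) + p^2 : ℤ) : ZMod (p^3)) ∈ RCl p j α :=
  (mem_RCl_iff hJ).2 ⟨1, by ring⟩

lemma RCl_mem_unique {α β : ZMod p} {x : ZMod (p^3)}
    (hα : x ∈ RCl p j α) (hβ : x ∈ RCl p j β) : α = β := by
  haveI : NeZero p := ⟨hp.pos.ne'⟩
  have hp0 : ((p:ℤ)) ≠ 0 := by exact_mod_cast hp.pos.ne'
  obtain ⟨n, rfl⟩ := ZMod.intCast_surjective x
  obtain ⟨a, ha⟩ := (mem_RCl_iff hJ).1 hα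
  obtain ⟨b, hb⟩ := (mem_RCl_iff hJ).1 hβ
  have h1 : (p:ℤ) * ((α.val:ℤ) - (β.val:ℤ)) = (p:ℤ) * ((p:ℤ)*(b - a)) := by
    linear_combination hb - ha
  have h2 : (α.val:ℤ) - (β.val:ℤ) = (p:ℤ)*(b-a) := mul_left_cancel₀ hp0 h1
  have h3 : (((α.val:ℤ) - (β.val:ℤ) : ℤ) : ZMod p) = 0 := by
    rw [h2]; push_cast; simp
  push_cast [ZMod.natCast_val, ZMod.cast_id] at h3
  rw [sub_eq_zero] at h3
  exact h3

lemma ncard_RFull : (RFull p j).ncard = p^2 := by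
  haveI : NeZero (p^2) := ⟨pow_ne_zero _ hp.pos.ne'⟩
  have hp0 : ((p:ℤ)) ≠ 0 := by exact_mod_cast hp.pos.ne'
  have hinj : Function.Injective (fun a : ZMod (p^2) => ((J + p * (a.val:ℤ) : ℤ) : ZMod (p^3))) := by
    intro a b hab
    simp only at hab
    rw [cast_eq_iff_mod] at hab
    obtain ⟨w, hw⟩ := hab
    have h2 : (a.val:ℤ) - (b.val:ℤ) = (p:ℤ)^2 * w := by
      apply mul_left_cancel₀ hp0
      linear_combination hw
    have hb1 : ((a.val:ℤ)) < (p:ℤ)^2 := by exact_mod_cast (by exact_mod_cast ZMod.val_lt a : a.val < p^2)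
    have hb2 : ((b.val:ℤ)) < (p:ℤ)^2 := by exact_mod_cast (by exact_mod_cast ZMod.val_lt b : b.val < p^2)
    have hb3 : (0:ℤ) ≤ (a.val:ℤ) := Int.natCast_nonneg _
    have hb4 : (0:ℤ) ≤ (b.val:ℤ) := Int.natCast_nonneg _
    have hw0 : w = 0 := by
      have hpp : (0:ℤ) < (p:ℤ)^2 := by positivity
      nlinarith
    have : (a.val:ℤ) = (b.val:ℤ) := by
      have h3 : (a.val:ℤ) - b.val = 0 := by rw [hw0] at h2; linear_combination h2
      linarith
    have hval : a.val = b.val := by exact_mod_cast this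
    exact ZMod.val_injective _ hval
  have himg : RFull p j = (fun a : ZMod (p^2) => ((J + p * (a.val:ℤ) : ℤ) : ZMod (p^3))) '' Set.univ := by
    ext x
    rw [Set.image_univ, Set.mem_range]
    constructor
    · intro hx
      obtain ⟨n, rfl⟩ := ZMod.intCast_surjective x
      obtain ⟨m, hm⟩ := (mem_RFull_iff hJ).1 hx
      refine ⟨(m : ZMod (p^2)), ?_⟩
      have hval : (((((m : ZMod (p^2)).val : ℤ) - m) : ℤ) : ZMod (p^2)) = 0 := by
        push_cast [ZMod.natCast_val, ZMod.cast_id]; ring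
      rw [ZMod.intCast_zmod_eq_zero_iff_dvd] at hval
      have hval' : (p:ℤ)^2 ∣ (((m : ZMod (p^2)).val : ℤ) - m) := by
        have : (((p^2 : ℕ)):ℤ) = (p:ℤ)^2 := by push_cast; ring
        rwa [this] at hval
      obtain ⟨w, hw⟩ := hval'
      rw [cast_eq_iff_mod]
      exact ⟨w, by linear_combination (p:ℤ)*hw - hm⟩
    · rintro ⟨a, rfl⟩
      exact (mem_RFull_iff hJ).2 ⟨(a.val:ℤ), by ring⟩
  rw [himg, Set.ncard_image_of_injective _ hinj, Set.ncard_univ, Nat.card_zmod]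

end

theorem count_rootSets_in_class_Zp3 (p : ℕ) (hp : p.Prime) (hp3 : 3 < p)
    (j : ZMod (p ^ 3)) :
    Set.ncard {R : Set (ZMod (p ^ 3)) |
        R ⊆ {x | (p : ZMod (p ^ 3)) ∣ (x - j)} ∧ IsRootSet R} =
      (3 * p ^ 2 + p + 4) / 2 := by
  classical
  haveI : NeZero p := ⟨hp.pos.ne'⟩
  obtain ⟨J, hJ⟩ := ZMod.intCast_surjective j
  set pm : Sym2 (ZMod p) → Set (ZMod (p^3)) :=
    Sym2.lift ⟨fun α β => RCl p j α ∪ RCl p j β, fun α β => Set.union_comm _ _⟩ with hpm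
  have hpmmk : ∀ α β : ZMod p, pm (s(α, β)) = RCl p j α ∪ RCl p j β := by
    intro α β; rw [hpm, Sym2.lift_mk]
  set Sing : Set (Set (ZMod (p^3))) := (fun r => ({r} : Set (ZMod (p^3)))) '' (RFull p j)
    with hSing
  set Pair : Set (Set (ZMod (p^3))) := Set.range pm with hPair
  have hSingmem : ∀ X : Set (ZMod (p^3)), X ∈ Sing ↔ ∃ r ∈ RFull p j, X = {r} := by
    intro X
    constructor
    · rintro ⟨r, hr, rfl⟩; exact ⟨r, hr, rfl⟩
    · rintro ⟨r, hr, rfl⟩; exact ⟨r, hr, rfl⟩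
  have hPairmem : ∀ X : Set (ZMod (p^3)),
      X ∈ Pair ↔ ∃ α β : ZMod p, X = RCl p j α ∪ RCl p j β := by
    intro X
    constructor
    · rintro ⟨m, rfl⟩
      induction m using Sym2.ind with
      | _ α β => exact ⟨α, β, (hpmmk α β)⟩
    · rintro ⟨α, β, rfl⟩; exact ⟨s(α, β), hpmmk α β⟩
  have hj_mem : j ∈ RFull p j := ⟨0, by simp⟩
  have hmain : {R : Set (ZMod (p ^ 3)) | R ⊆ {x | (p : ZMod (p ^ 3)) ∣ (x - j)} ∧ IsRootSet R}
      = insert ∅ (insert (RFull p j) (Sing ∪ Pair)) := by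
    ext R
    simp only [Set.mem_setOf_eq, Set.mem_insert_iff, Set.mem_union]
    constructor
    · rintro ⟨h1, h2⟩
      rcases char_rootsets hp R h1 h2 with h | h | ⟨r, hr, h⟩ | ⟨α, β, h⟩
      · exact Or.inl h
      · exact Or.inr (Or.inl h)
      · exact Or.inr (Or.inr (Or.inl ((hSingmem R).2 ⟨r, hr, h⟩)))
      · exact Or.inr (Or.inr (Or.inr ((hPairmem R).2 ⟨α, β, h⟩)))
    · rintro (rfl | rfl | hR | hR)
      · exact ⟨Set.empty_subset _, rootset_empty' hp⟩
      · exact ⟨subset_rfl, rootset_full' hp⟩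
      · obtain ⟨r, hr, rfl⟩ := (hSingmem R).1 hR
        exact ⟨Set.singleton_subset_iff.2 hr, rootset_singleton' hp r⟩
      · obtain ⟨α, β, rfl⟩ := (hPairmem R).1 hR
        refine ⟨Set.union_subset ?_ ?_, rootset_pair' hp α β⟩
        · exact RCl_subset_RFull hp α
        · exact RCl_subset_RFull hp β
  have hempty_notin : (∅ : Set (ZMod (p^3))) ∉ insert (RFull p j) (Sing ∪ Pair) := by
    intro h
    rcases Set.mem_insert_iff.1 h with h | h
    · rw [← h] at hj_mem; exact hj_mem
    rcases h with h | h
    · obtain ⟨r, _, heq⟩ := (hSingmem _).1 h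
      exact (Set.singleton_ne_empty r) heq.symm
    · obtain ⟨α, β, heq⟩ := (hPairmem _).1 h
      have hm := mem_RCl_self hp hJ α
      have : ((J + p*(α.val:ℤ) : ℤ) : ZMod (p^3)) ∈ (∅ : Set (ZMod (p^3))) := by
        rw [heq]; exact Set.mem_union_left _ hm
      exact this
  have hFull_notin : RFull p j ∉ Sing ∪ Pair := by
    intro h
    rcases h with h | h
    · obtain ⟨r, _, heq⟩ := (hSingmem _).1 h
      have e1 : ((J : ℤ) : ZMod (p^3)) ∈ RFull p j := (mem_RFull_iff hJ).2 ⟨0, by ring⟩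
      have e2 : ((J + p : ℤ) : ZMod (p^3)) ∈ RFull p j := (mem_RFull_iff hJ).2 ⟨1, by ring⟩
      rw [heq, Set.mem_singleton_iff] at e1 e2
      have e3 := e1.trans e2.symm
      rw [cast_eq_iff_mod] at e3
      exact not_dvd_p3_p1 hp (by simpa using e3.neg_right)
    · obtain ⟨α, β, heq⟩ := (hPairmem _).1 h
      have hγ : ∃ γ : ZMod p, γ ≠ α ∧ γ ≠ β := by
        by_contra hcon
        push_neg at hcon
        have hsub : (Finset.univ : Finset (ZMod p)) ⊆ {α, β} := by
          intro γ _
          simp only [Finset.mem_insert, Finset.mem_singleton]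
          by_cases hγ : γ = α
          · exact Or.inl hγ
          · exact Or.inr (hcon γ hγ)
        have hle := Finset.card_le_card hsub
        have h2 : ({α, β} : Finset (ZMod p)).card ≤ 2 :=
          le_trans (Finset.card_insert_le _ _) (by simp)
        rw [Finset.card_univ, ZMod.card] at hle
        omega
      obtain ⟨γ, hγα, hγβ⟩ := hγ
      have hmem : ((J + p*(γ.val:ℤ) : ℤ) : ZMod (p^3)) ∈ RFull p j :=
        (mem_RFull_iff hJ).2 ⟨(γ.val:ℤ), by ring⟩
      rw [heq] at hmem
      rcases hmem with h' | h'
      · exact hγα (RCl_mem_unique hp hJ (mem_RCl_self hp hJ γ) h')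
      · exact hγβ (RCl_mem_unique hp hJ (mem_RCl_self hp hJ γ) h')
  have hdisj : Disjoint Sing Pair := by
    rw [Set.disjoint_left]
    intro S hS hP
    obtain ⟨r, _, rfl⟩ := (hSingmem _).1 hS
    obtain ⟨α, β, hm⟩ := (hPairmem _).1 hP
    have e1 : ((J + p*(α.val:ℤ) : ℤ) : ZMod (p^3)) ∈ ({r} : Set (ZMod (p^3))) := by
      rw [hm]; exact Set.mem_union_left _ (mem_RCl_self hp hJ α)
    have e2 : ((J + p*(α.val:ℤ) + p^2 : ℤ) : ZMod (p^3)) ∈ ({r} : Set (ZMod (p^3))) := by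
      rw [hm]; exact Set.mem_union_left _ (mem_RCl_self' hp hJ α)
    rw [Set.mem_singleton_iff] at e1 e2
    have e3 := e1.trans e2.symm
    rw [cast_eq_iff_mod] at e3
    exact not_dvd_p3_p2 hp (by simpa using e3.neg_right)
  have hpminj : Function.Injective pm := by
    have key : ∀ a b c d : ZMod p, RCl p j a ∪ RCl p j b = RCl p j c ∪ RCl p j d
        → a = c ∨ a = d := by
      intro a b c d hh
      have hm := mem_RCl_self hp hJ a
      have h2 : ((J + p*(a.val:ℤ) : ℤ) : ZMod (p^3)) ∈ RCl p j c ∪ RCl p j d := by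
        rw [← hh]; exact Set.mem_union_left _ hm
      rcases h2 with h2 | h2
      · exact Or.inl (RCl_mem_unique hp hJ hm h2)
      · exact Or.inr (RCl_mem_unique hp hJ hm h2)
    have key2 : ∀ α β γ δ : ZMod p, pm (s(α, β)) = pm (s(γ, δ)) →
        s(α, β) = s(γ, δ) := by
      intro α β γ δ h
      rw [hpmmk, hpmmk] at h
      have h1 := key α β γ δ h
      have h2 := key β α γ δ (by rw [Set.union_comm]; exact h)
      have h3 := key γ δ α β h.symm
      have h4 := key δ γ α β (by rw [Set.union_comm]; exact h.symm)
      rw [Sym2.eq_iff]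
      rcases h1 with h1 | h1 <;> rcases h2 with h2 | h2 <;>
        rcases h3 with h3 | h3 <;> rcases h4 with h4 | h4 <;> subst_vars <;> tauto
    intro m₁ m₂
    induction m₁ using Sym2.ind with
    | _ α β =>
      induction m₂ using Sym2.ind with
      | _ γ δ => exact key2 α β γ δ
  have hS : Sing.ncard = p^2 := by
    rw [hSing, Set.ncard_image_of_injective _ Set.singleton_injective, ncard_RFull hp hJ]
  have hP : Pair.ncard = (p+1).choose 2 := by
    rw [hPair, ← Set.image_univ, Set.ncard_image_of_injective _ hpminj, Set.ncard_univ,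
      Nat.card_eq_fintype_card, Sym2.card, ZMod.card]
  rw [hmain, Set.ncard_insert_of_notMem hempty_notin (Set.toFinite _),
    Set.ncard_insert_of_notMem hFull_notin (Set.toFinite _),
    Set.ncard_union_eq hdisj (Set.toFinite _) (Set.toFinite _), hS, hP]
  rw [Nat.choose_two_right]
  obtain ⟨k, hk⟩ := hp.odd_of_ne_two (by omega)
  subst hk
  have e1 : (2*k+1)^2 = 4*(k*k)+4*k+1 := by ring
  have e2 : (2*k+1+1)*((2*k+1+1)-1) = 2*(2*(k*k)+3*k+1) := by
    rw [show (2*k+1+1)-1 = 2*k+1 from rfl]; ring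
  rw [e1, e2]
  generalize k*k = m
  omega
end

section
/- Let p be a prime with 3 < p, and f ∈ ℤ_{p³}[x]. If f has two roots j + pα₁ + p²β₁ and j + pα₂ + p²β₂ in ℤ_{p³} with α₁ ≢ α₂ (mod p), then f(j) ≡ 0 (mod p²) and f'(j) ≡ 0 (mod p), and for every root j + pα + p²β of f, the whole subtree {j + pα + p²γ | γ ∈ {0,...,p-1}} consists of roots of f. -/
open Polynomial

lemma eval_of_cube_zero {R : Type*} [CommRing R] (g : R[X]) (y : R) (hy : y ^ 3 = 0) :
    g.eval y = g.coeff 0 + g.coeff 1 * y + g.coeff 2 * y ^ 2 := by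
  nontriviality R
  have hm : (Polynomial.X ^ 3 : R[X]).Monic := Polynomial.monic_X_pow 3
  have hdecomp := Polynomial.modByMonic_add_div g (X ^ 3 : R[X])
  set r := g %ₘ (X ^ 3 : R[X]) with hr
  have hco : ∀ i < 3, r.coeff i = g.coeff i := by
    intro i hi
    have hdvd : (X : R[X]) ^ 3 ∣ (g - r) := ⟨g /ₘ (X ^ 3 : R[X]), by linear_combination -hdecomp⟩
    have := (Polynomial.X_pow_dvd_iff.mp hdvd) i hi
    rw [Polynomial.coeff_sub, sub_eq_zero] at this
    exact this.symm
  have hdeg : r.natDegree < 3 := by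
    have h1 : r.degree < (X ^ 3 : R[X]).degree := Polynomial.degree_modByMonic_lt g hm
    rw [Polynomial.degree_X_pow] at h1
    rcases eq_or_ne r 0 with h0 | h0
    · simp [h0]
    · exact (Polynomial.natDegree_lt_iff_degree_lt h0).mpr h1
  have heval : g.eval y = r.eval y := by
    have : g.eval y = r.eval y + y ^ 3 * (g /ₘ (X ^ 3 : R[X])).eval y := by
      conv_lhs => rw [← hdecomp]
      simp [mul_comm]
    rw [this, hy, zero_mul, add_zero]
  rw [heval, Polynomial.eval_eq_sum_range' hdeg]
  rw [Finset.sum_range_succ, Finset.sum_range_succ, Finset.sum_range_succ,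
    Finset.sum_range_zero]
  rw [hco 0 (by norm_num), hco 1 (by norm_num), hco 2 (by norm_num)]
  ring

theorem two_roots_distinct_at_level_p_in_Zp3
    (p : ℕ) (hp : p.Prime) (hp3 : 3 < p)
    (f : Polynomial (ZMod (p ^ 3))) (j α₁ β₁ α₂ β₂ : ZMod (p ^ 3))
    (hα : ¬ ((p : ZMod (p ^ 3)) ∣ (α₁ - α₂)))
    (h1 : f.eval (j + (p : ZMod (p ^ 3)) * α₁ + (p : ZMod (p ^ 3)) ^ 2 * β₁) = 0)
    (h2 : f.eval (j + (p : ZMod (p ^ 3)) * α₂ + (p : ZMod (p ^ 3)) ^ 2 * β₂) = 0) :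
    (p : ZMod (p ^ 3)) ^ 2 ∣ f.eval j ∧
    (p : ZMod (p ^ 3)) ∣ f.derivative.eval j ∧
    ∀ α β : ZMod (p ^ 3), f.eval (j + (p : ZMod (p ^ 3)) * α + (p : ZMod (p ^ 3)) ^ 2 * β) = 0 →
      ∀ γ : ZMod (p ^ 3), f.eval (j + (p : ZMod (p ^ 3)) * α + (p : ZMod (p ^ 3)) ^ 2 * γ) = 0 := by
  haveI : NeZero (p ^ 3) := ⟨pow_ne_zero _ hp.pos.ne'⟩
  set π : ZMod (p ^ 3) := (p : ZMod (p ^ 3)) with hπdef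
  have hπ3 : π ^ 3 = 0 := by
    rw [hπdef, ← Nat.cast_pow, ZMod.natCast_self]
  -- transfer lemmas
  have hcastdvd : ∀ k : ℕ, k ≤ 3 → ∀ w : ZMod (p ^ 3), (π ^ k ∣ w ↔ p ^ k ∣ w.val) := by
    intro k hk w
    constructor
    · rintro ⟨u, hu⟩
      have : (w.val : ZMod (p ^ 3)) = ((p ^ k * u.val : ℕ) : ZMod (p ^ 3)) := by
        push_cast
        rw [ZMod.natCast_zmod_val, ZMod.natCast_zmod_val, hu, hπdef]
      rw [ZMod.natCast_eq_natCast_iff] at this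
      have h3 : p ^ k ∣ p ^ 3 := pow_dvd_pow p hk
      have := (this.of_dvd h3)
      have h0 : p ^ k * u.val ≡ 0 [MOD p ^ k] := (Nat.modEq_zero_iff_dvd).mpr ⟨u.val, rfl⟩
      have := this.trans h0
      exact (Nat.modEq_zero_iff_dvd).mp this
    · rintro ⟨t, ht⟩
      refine ⟨(t : ZMod (p ^ 3)), ?_⟩
      have : w = ((p ^ k * t : ℕ) : ZMod (p ^ 3)) := by rw [← ht, ZMod.natCast_zmod_val]
      rw [this]; push_cast; rw [hπdef]
  have hmulzero : ∀ w : ZMod (p ^ 3), π * w = 0 → π ^ 2 ∣ w := by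
    intro w hw
    have : ((p * w.val : ℕ) : ZMod (p ^ 3)) = 0 := by
      push_cast; rw [ZMod.natCast_zmod_val, ← hπdef]; exact hw
    rw [ZMod.natCast_eq_zero_iff] at this
    have h2 : p ^ 2 ∣ w.val := by
      have hp0 : 0 < p := hp.pos
      rcases this with ⟨t, ht⟩
      refine ⟨t, ?_⟩
      have : p * w.val = p * (p ^ 2 * t) := by rw [ht]; ring
      exact Nat.eq_of_mul_eq_mul_left hp0 this
    exact (hcastdvd 2 (by norm_num) w).mpr h2
  have hsplit : ∀ a b : ZMod (p ^ 3), π ∣ a * b → π ∣ a ∨ π ∣ b := by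
    intro a b hab
    have h1' : p ∣ (a * b).val := by
      have := (hcastdvd 1 (by norm_num) (a * b)).mp (by rwa [pow_one])
      rwa [pow_one] at this
    have hval : (a * b).val ≡ a.val * b.val [MOD p ^ 3] := by
      rw [← ZMod.natCast_eq_natCast_iff]
      push_cast
      rw [ZMod.natCast_zmod_val, ZMod.natCast_zmod_val, ZMod.natCast_zmod_val]
    have hpd : p ∣ a.val * b.val := by
      have hmod : (a * b).val ≡ a.val * b.val [MOD p] :=
        hval.of_dvd (dvd_pow_self p (by norm_num))
      exact (Nat.modEq_zero_iff_dvd).mp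
        ((hmod.symm.trans ((Nat.modEq_zero_iff_dvd).mpr h1')))
    rcases (Nat.Prime.dvd_mul hp).mp hpd with h | h
    · left
      have := (hcastdvd 1 (by norm_num) a).mpr (by rwa [pow_one])
      rwa [pow_one] at this
    · right
      have := (hcastdvd 1 (by norm_num) b).mpr (by rwa [pow_one])
      rwa [pow_one] at this
  -- Taylor expansion
  set c₀ : ZMod (p ^ 3) := f.eval j with hc0
  set c₁ : ZMod (p ^ 3) := f.derivative.eval j with hc1
  set c₂ : ZMod (p ^ 3) := (Polynomial.taylor j f).coeff 2 with hc2
  have key : ∀ α β : ZMod (p ^ 3), f.eval (j + π * α + π ^ 2 * β)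
      = c₀ + c₁ * π * α + c₁ * π ^ 2 * β + c₂ * π ^ 2 * α ^ 2 := by
    intro α β
    have hy : (π * α + π ^ 2 * β) ^ 3 = 0 := by
      have h : (π * α + π ^ 2 * β) ^ 3 = π ^ 3 * (α + π * β) ^ 3 := by ring
      rw [h, hπ3, zero_mul]
    have heq : f.eval (j + π * α + π ^ 2 * β)
        = (Polynomial.taylor j f).eval (π * α + π ^ 2 * β) := by
      rw [Polynomial.taylor_eval]
      ring_nf
    rw [heq, eval_of_cube_zero _ _ hy, Polynomial.taylor_coeff_zero,
      Polynomial.taylor_coeff_one, ← hc0, ← hc1, ← hc2]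
    linear_combination (c₂ * (2 * α * β + π * β ^ 2)) * hπ3
  have h1' : c₀ + c₁ * π * α₁ + c₁ * π ^ 2 * β₁ + c₂ * π ^ 2 * α₁ ^ 2 = 0 := by
    rw [← key α₁ β₁]; exact h1
  have h2' : c₀ + c₁ * π * α₂ + c₁ * π ^ 2 * β₂ + c₂ * π ^ 2 * α₂ ^ 2 = 0 := by
    rw [← key α₂ β₂]; exact h2
  have E : π * (c₁ * (α₁ - α₂) + π * (c₁ * (β₁ - β₂) + c₂ * (α₁ ^ 2 - α₂ ^ 2))) = 0 := by
    linear_combination h1' - h2'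
  have hE2 := hmulzero _ E
  have hE1 : π ∣ c₁ * (α₁ - α₂) := by
    have hpp : π ∣ c₁ * (α₁ - α₂) + π * (c₁ * (β₁ - β₂) + c₂ * (α₁ ^ 2 - α₂ ^ 2)) :=
      dvd_trans (dvd_pow_self π (two_ne_zero)) hE2
    have hsub : π ∣ π * (c₁ * (β₁ - β₂) + c₂ * (α₁ ^ 2 - α₂ ^ 2)) := dvd_mul_right π _
    have := dvd_sub hpp hsub
    simpa using this
  have hc₁ : π ∣ c₁ := by
    rcases hsplit _ _ hE1 with h | h
    · exact h
    · exact absurd h hα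
  obtain ⟨d, hd⟩ := hc₁
  refine ⟨⟨-(d * α₁ + c₂ * α₁ ^ 2), by
    linear_combination h1' - (π * α₁ + π ^ 2 * β₁) * hd - (d * β₁) * hπ3⟩,
    ⟨d, hd⟩, ?_⟩
  intro α β hroot γ
  have hroot' : c₀ + c₁ * π * α + c₁ * π ^ 2 * β + c₂ * π ^ 2 * α ^ 2 = 0 := by
    rw [← key α β]; exact hroot
  rw [key α γ]
  linear_combination hroot' + π ^ 2 * (γ - β) * hd + d * (γ - β) * hπ3
end

section
/- Let S₁, ..., S_m be disjoint finite subsets of ℤ such that all elements within each S_i are congruent mod p, elements of distinct S_i are incongruent mod p, and let S = S₁ ∪ ... ∪ S_m. A sequence enumerating S is a p-ordering of S if and only if, for each i, its subsequence of elements of S_i is a p-ordering of S_i and at each step the chosen element has minimal p-value among the next unchosen elements of all the S_i's (where the p-value of x at a step is v_p of the product of differences of x with all previously chosen elements). In particular, merging given p-orderings of the S_i by repeatedly selecting the head with minimal current p-value yields a valid p-ordering of S. -/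
/-- `l` is a `p`-ordering of the finite set `S ⊆ ℤ`, as a list: it enumerates `S`
without repetition and each entry minimizes the `p`-adic valuation of the product of its
differences with the previously listed elements, among the remaining elements of `S`. -/
def IsPOrderingL (p : ℕ) (S : Finset ℤ) (l : List ℤ) : Prop :=
  l.Nodup ∧ l.toFinset = S ∧
  ∀ (i : ℕ) (h : i < l.length), 0 < i → ∀ x ∈ S, x ∉ l.take i →
    padicValInt p (((l.take i).map (fun a => l.get ⟨i, h⟩ - a)).prod) ≤
      padicValInt p (((l.take i).map (fun a => x - a)).prod)

/-- At each step `t`, the element `l.get t` has minimal `p`-value among the next unchosen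
elements of each of the sets `S i`, where the order on `S i` is the subsequence of `l`
consisting of elements of `S i`. -/
def HeadMinimal (p : ℕ) {m : ℕ} (S : Fin m → Finset ℤ) (l : List ℤ) : Prop :=
  ∀ (t : ℕ) (h : t < l.length), ∀ (i : Fin m) (x : ℤ),
    ((l.filter (fun a => decide (a ∈ S i))).filter
        (fun a => decide (a ∉ l.take t))).head? = some x →
    padicValInt p (((l.take t).map (fun a => l.get ⟨t, h⟩ - a)).prod) ≤
      padicValInt p (((l.take t).map (fun a => x - a)).prod)


lemma pom_val_filter (p : ℕ) (hp : p.Prime) {m : ℕ} (S : Fin m → Finset ℤ)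
    (hacross : ∀ i i' : Fin m, i ≠ i' → ∀ a ∈ S i, ∀ b ∈ S i', ¬ a ≡ b [ZMOD (p : ℤ)])
    (j : Fin m) (x : ℤ) (hx : x ∈ S j) :
    ∀ L : List ℤ, (∀ a ∈ L, ∃ i, a ∈ S i) → x ∉ L →
    padicValInt p ((L.map (fun a => x - a)).prod) =
      padicValInt p (((L.filter (fun a => decide (a ∈ S j))).map (fun a => x - a)).prod) := by
  haveI := Fact.mk hp
  intro L
  induction L with
  | nil => simp
  | cons a L ih =>
    intro hU hxL
    have hxa : x - a ≠ 0 := sub_ne_zero.mpr fun h => hxL (h ▸ (List.mem_cons_self (a := a) (l := L)))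
    have hprod : ∀ M : List ℤ, (∀ b ∈ M, b ∈ a :: L) → ((M.map (fun b => x - b)).prod ≠ 0) := by
      intro M hM
      apply List.prod_ne_zero
      intro h0
      obtain ⟨b, hb, hb0⟩ := List.mem_map.mp h0
      exact hxL ((sub_eq_zero.mp hb0) ▸ hM b hb)
    have hUL : ∀ b ∈ L, ∃ i, b ∈ S i := fun b hb => hU b (List.mem_cons_of_mem a hb)
    have hxL' : x ∉ L := fun h => hxL (List.mem_cons_of_mem a h)
    by_cases hmem : a ∈ S j
    · rw [List.filter_cons_of_pos (by simpa using hmem)]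
      simp only [List.map_cons, List.prod_cons]
      rw [padicValInt.mul hxa (hprod L (fun b hb => List.mem_cons_of_mem a hb)),
          padicValInt.mul hxa (hprod (L.filter _)
            (fun b hb => List.mem_cons_of_mem a (List.mem_of_mem_filter hb))),
          ih hUL hxL']
    · rw [List.filter_cons_of_neg (by simpa using hmem)]
      simp only [List.map_cons, List.prod_cons]
      rw [padicValInt.mul hxa (hprod L (fun b hb => List.mem_cons_of_mem a hb)), ih hUL hxL']
      have hva : padicValInt p (x - a) = 0 := by
        obtain ⟨i', hi'⟩ := hU a ((List.mem_cons_self (a := a) (l := L)))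
        have hne : j ≠ i' := fun h => hmem (h ▸ hi')
        apply padicValInt.eq_zero_of_not_dvd
        intro hdvd
        exact hacross j i' hne x hx a hi' (Int.modEq_iff_dvd.mpr hdvd).symm
      rw [hva, Nat.zero_add]

lemma pom_filter_split (l : List ℤ) (P : ℤ → Bool) (t : ℕ) :
    l.filter P = (l.take t).filter P ++ (l.drop t).filter P := by
  conv_lhs => rw [← List.take_append_drop t l]
  rw [List.filter_append]

lemma pom_filter_notin (l : List ℤ) (hn : l.Nodup) (P : ℤ → Bool) (t : ℕ) :
    (l.filter P).filter (fun a => decide (a ∉ l.take t)) =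
      (l.filter P).drop ((l.take t).filter P).length := by
  have hnd : (l.take t ++ l.drop t).Nodup := by rw [List.take_append_drop]; exact hn
  have hd := (List.nodup_append'.mp hnd).2.2
  have h1 : ((l.take t).filter P).filter (fun a => decide (a ∉ l.take t)) = [] := by
    rw [List.filter_eq_nil_iff]
    intro a ha
    simp [List.mem_of_mem_filter ha]
  have h2 : ((l.drop t).filter P).filter (fun a => decide (a ∉ l.take t)) =
      (l.drop t).filter P := by
    rw [List.filter_eq_self]
    intro a ha
    simp only [decide_eq_true_eq]
    exact fun hmem => hd hmem (List.mem_of_mem_filter ha)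
  rw [pom_filter_split l P t, List.filter_append, h1, h2, List.nil_append, List.drop_left]

theorem pOrdering_merge (p : ℕ) (hp : p.Prime) (m : ℕ) (S : Fin m → Finset ℤ)
    (hdisj : ∀ i i' : Fin m, i ≠ i' → Disjoint (S i) (S i'))
    (hwithin : ∀ i : Fin m, ∀ a ∈ S i, ∀ b ∈ S i, a ≡ b [ZMOD (p : ℤ)])
    (hacross : ∀ i i' : Fin m, i ≠ i' → ∀ a ∈ S i, ∀ b ∈ S i', ¬ a ≡ b [ZMOD (p : ℤ)]) :
    (∀ l : List ℤ, l.Nodup → l.toFinset = Finset.univ.biUnion S →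
      (IsPOrderingL p (Finset.univ.biUnion S) l ↔
        ((∀ i : Fin m, IsPOrderingL p (S i) (l.filter (fun a => decide (a ∈ S i)))) ∧
          HeadMinimal p S l))) ∧
    (∀ c : Fin m → List ℤ, (∀ i, IsPOrderingL p (S i) (c i)) →
      ∀ l : List ℤ, l.Nodup → l.toFinset = Finset.univ.biUnion S →
        (∀ i, l.filter (fun a => decide (a ∈ S i)) = c i) →
        HeadMinimal p S l →
        IsPOrderingL p (Finset.univ.biUnion S) l) := by
  have main : ∀ l : List ℤ, l.Nodup → l.toFinset = Finset.univ.biUnion S →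
      (IsPOrderingL p (Finset.univ.biUnion S) l ↔
        ((∀ i : Fin m, IsPOrderingL p (S i) (l.filter (fun a => decide (a ∈ S i)))) ∧
          HeadMinimal p S l)) := by
    intro l hn hl
    have hUl : ∀ a ∈ l, ∃ i, a ∈ S i := by
      intro a ha
      have : a ∈ Finset.univ.biUnion S := hl ▸ List.mem_toFinset.mpr ha
      simpa using this
    have hmemU : ∀ i : Fin m, ∀ x ∈ S i, x ∈ Finset.univ.biUnion S := by
      intro i x hx
      exact Finset.mem_biUnion.mpr ⟨i, Finset.mem_univ i, hx⟩
    constructor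
    · rintro ⟨-, -, hmin⟩
      constructor
      · intro i
        set P := fun a => decide (a ∈ S i) with hP
        set f := l.filter P with hf
        refine ⟨hn.filter _, ?_, ?_⟩
        · ext a
          simp only [hf, List.mem_toFinset, List.mem_filter, hP, decide_eq_true_eq]
          constructor
          · rintro ⟨-, h⟩; exact h
          · intro h
            exact ⟨by rw [← List.mem_toFinset, hl]; exact hmemU i a h, h⟩
        · intro k hk hk0 x hxS hxtake
          set y := f.get ⟨k, hk⟩ with hy
          have hyf : y ∈ f := List.get_mem ..
          have hyl : y ∈ l := List.mem_of_mem_filter hyf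
          have hySi : y ∈ S i := by
            have := (List.mem_filter.mp hyf).2
            simpa [hP] using this
          obtain ⟨t, hgt⟩ := List.mem_iff_get.mp hyl
          have hdl : l.drop ↑t = y :: l.drop (↑t + 1) := by
            rw [List.drop_eq_getElem_cons t.isLt, ← List.get_eq_getElem, hgt]
          have hsplit : l = l.take ↑t ++ y :: l.drop (↑t + 1) := by
            rw [← hdl, List.take_append_drop]
          set A := (l.take ↑t).filter P with hA
          have hfA : f = A ++ y :: (l.drop (↑t + 1)).filter P := by
            rw [hf]
            conv_lhs => rw [hsplit]
            rw [List.filter_append, List.filter_cons_of_pos (by simp [hP, hySi])]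
          have hyt : y ∉ l.take ↑t := by
            intro hmem
            have hnd := hsplit ▸ hn
            exact (List.nodup_append'.mp hnd).2.2 hmem (List.mem_cons_self ..)
          have hlenA : A.length < f.length := by rw [hfA]; simp
          have hgetA : f.get ⟨A.length, hlenA⟩ = y := by
            simp only [List.get_eq_getElem]
            simp [hfA, List.getElem_append_right (Nat.le_refl A.length)]
          have hkA : k = A.length := by
            have h3 : f.get ⟨A.length, hlenA⟩ = f.get ⟨k, hk⟩ := by rw [hgetA, hy]
            have := (hn.filter P).get_inj_iff.mp h3
            exact (Fin.mk.injEq ..▸ this).symm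
          have htakef : f.take k = A := by rw [hkA, hfA, List.take_left]
          have ht0 : 0 < (t : ℕ) := by
            rcases Nat.eq_zero_or_pos ↑t with h0 | h; swap
            · exact h
            · exfalso
              have : A = [] := by rw [hA, h0]; simp
              rw [hkA, this] at hk0
              simp at hk0
          have hxt : x ∉ l.take ↑t := by
            intro hmem
            exact hxtake (htakef ▸ List.mem_filter.mpr ⟨hmem, by simp [hP, hxS]⟩)
          have hUtake : ∀ a ∈ l.take ↑t, ∃ i', a ∈ S i' :=
            fun a ha => hUl a (List.mem_of_mem_take ha)
          have hvy := pom_val_filter p hp S hacross i y hySi (l.take ↑t) hUtake hyt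
          have hvx := pom_val_filter p hp S hacross i x hxS (l.take ↑t) hUtake hxt
          have hm := hmin ↑t t.isLt ht0 x (hmemU i x hxS) hxt
          rw [show l.get ⟨↑t, t.isLt⟩ = y from by rw [← hgt]] at hm
          rw [hvy, hvx, ← hA, ← htakef] at hm
          rw [hy] at hm
          exact hm
      · intro t ht i x hx
        rcases Nat.eq_zero_or_pos t with rfl | ht0
        · simp
        · have hxf := List.mem_of_mem_head? hx
          have hxl : x ∈ l := List.mem_of_mem_filter (List.mem_of_mem_filter hxf)
          have hxt : x ∉ l.take t := by
            have := List.of_mem_filter hxf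
            simpa using this
          have hxS : ∃ i', x ∈ S i' := hUl x hxl
          obtain ⟨i', hi'⟩ := hxS
          exact hmin t ht ht0 x (hmemU i' x hi') hxt
    · rintro ⟨h1, h2⟩
      refine ⟨hn, hl, ?_⟩
      intro t ht ht0 x hxU hxt
      obtain ⟨i, -, hxS⟩ := Finset.mem_biUnion.mp hxU
      set P := fun a => decide (a ∈ S i) with hP
      set f := l.filter P with hf
      set k := ((l.take t).filter P).length with hk
      have hsplitf : f = (l.take t).filter P ++ (l.drop t).filter P := pom_filter_split l P t
      have htake : f.take k = (l.take t).filter P := by rw [hsplitf, hk, List.take_left]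
      have hdropf : f.drop k = (l.drop t).filter P := by rw [hsplitf, hk, List.drop_left]
      have hCeq : f.filter (fun a => decide (a ∉ l.take t)) = f.drop k :=
        pom_filter_notin l hn P t
      have hxl : x ∈ l := by rw [← List.mem_toFinset, hl]; exact hxU
      have hxf : x ∈ f := List.mem_filter.mpr ⟨hxl, by simp [hP, hxS]⟩
      have hxtk : x ∉ f.take k := fun h => hxt (List.mem_of_mem_filter (htake ▸ h))
      have hxdrop : x ∈ f.drop k := by
        have : x ∈ f.take k ++ f.drop k := by rw [List.take_append_drop]; exact hxf
        rcases List.mem_append.mp this with h | h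
        · exact absurd h hxtk
        · exact h
      have hkf : k < f.length := by
        by_contra h
        rw [List.drop_eq_nil_of_le (Nat.le_of_not_lt h)] at hxdrop
        simp at hxdrop
      set y := f.get ⟨k, hkf⟩ with hy
      have hhead : (f.filter (fun a => decide (a ∉ l.take t))).head? = some y := by
        rw [hCeq, List.head?_drop]
        simp [List.getElem?_eq_getElem hkf, hy]
      have hyf : y ∈ f := List.get_mem ..
      have hySi : y ∈ S i := by
        have := (List.mem_filter.mp hyf).2
        simpa [hP] using this
      have hydrop : y ∈ f.drop k := by
        rw [← hCeq] at *
        exact List.mem_of_mem_head? hhead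
      have hyt : y ∉ l.take t := by
        have := List.of_mem_filter (hCeq ▸ hydrop)
        simpa using this
      have hytk : y ∉ f.take k := fun h => hyt (List.mem_of_mem_filter (htake ▸ h))
      have hUtake : ∀ a ∈ l.take t, ∃ i', a ∈ S i' :=
        fun a ha => hUl a (List.mem_of_mem_take ha)
      have hvy := pom_val_filter p hp S hacross i y hySi (l.take t) hUtake hyt
      have hvx := pom_val_filter p hp S hacross i x hxS (l.take t) hUtake hxt
      have hstep : padicValInt p (((f.take k).map (fun a => y - a)).prod) ≤
          padicValInt p (((f.take k).map (fun a => x - a)).prod) := by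
        rcases Nat.eq_zero_or_pos k with hk0 | hk0
        · rw [hk0]; simp
        · exact (h1 i).2.2 k hkf hk0 x hxS hxtk
      calc padicValInt p (((l.take t).map (fun a => l.get ⟨t, ht⟩ - a)).prod)
          ≤ padicValInt p (((l.take t).map (fun a => y - a)).prod) := h2 t ht i y hhead
        _ = padicValInt p (((f.take k).map (fun a => y - a)).prod) := by rw [hvy, htake]
        _ ≤ padicValInt p (((f.take k).map (fun a => x - a)).prod) := hstep
        _ = padicValInt p (((l.take t).map (fun a => x - a)).prod) := by rw [hvx, htake]
  exact ⟨main, fun c hc l hn hl hfil hmin =>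
    (main l hn hl).mpr ⟨fun i => (hfil i) ▸ hc i, hmin⟩⟩
end
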